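/- arXiv:1502.05277 — 5 statements merged into one kernel-verified Lean document; each statement's English description precedes it below -/
import Mathlib

section
/- For all integers k ≥ 3 and t with 0 ≤ t ≤ 2^{k−2} − 2, and for every vertex x of R_{k,t}, the graph R_{k,t} − x obtained by deleting x has tree-depth exactly k − 1. -/
/-- A `k`-ranking of a simple graph `G`: a labeling of the vertices with values from
`{1, …, k}` such that every path joining two distinct vertices with the same label
contains a vertex with a strictly higher label. -/
def IsRanking {V : Type*} (G : SimpleGraph V) (k : ℕ) (f : V → ℕ) : Prop :=
  (∀ v, 1 ≤ f v ∧ f v ≤ k) ∧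
  ∀ ⦃u v : V⦄ (p : G.Walk u v), p.IsPath → u ≠ v → f u = f v →
    ∃ w ∈ p.support, f u < f w

/-- The tree-depth of `G`: the least `k` such that `G` admits a `k`-ranking. -/
noncomputable def treedepth {V : Type*} (G : SimpleGraph V) : ℕ :=
  sInf {k | ∃ f, IsRanking G k f}

/-- The graph `R_{k,t}`: a path `v_1, …, v_{2^{k-2}+1+t}` (vertex `v_i` is index `i - 1`
in `Fin (2^(k-2)+1+t)`) together with an added edge between `v_{t+1}` (index `t`) and
`v_{2^{k-2}+1}` (index `2^(k-2)`). -/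
def Rgraph (k t : ℕ) : SimpleGraph (Fin (2 ^ (k - 2) + 1 + t)) :=
  SimpleGraph.fromRel (fun i j =>
    i.val + 1 = j.val ∨ (i.val = t ∧ j.val = 2 ^ (k - 2)))

/-! ### ruler function facts -/

/-- ruler value -/
def rul (c : ℕ) : ℕ := c.factorization 2 + 1

lemma rul_pos (c : ℕ) : 1 ≤ rul c := Nat.le_add_left 1 _

lemma pow_dvd_of_le_rul {c e : ℕ} (hc : c ≠ 0) (h : e + 1 ≤ rul c) : 2 ^ e ∣ c := by
  rw [Nat.Prime.pow_dvd_iff_le_factorization Nat.prime_two hc]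
  unfold rul at h; omega

lemma rul_le_of_not_dvd {c e : ℕ} (hc : c ≠ 0) (h : ¬ (2 ^ e ∣ c)) : rul c ≤ e := by
  by_contra hlt
  exact h (pow_dvd_of_le_rul hc (by omega))

lemma le_rul_of_dvd {c e : ℕ} (hc : c ≠ 0) (h : 2 ^ e ∣ c) : e + 1 ≤ rul c := by
  rw [Nat.Prime.pow_dvd_iff_le_factorization Nat.prime_two hc] at h
  unfold rul; omega

/-- the key gap property of the ruler sequence -/
lemma rul_gap {a b : ℕ} (ha : 0 < a) (hab : a < b) (h : rul a = rul b) :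
    ∃ c, a < c ∧ c < b ∧ rul a < rul c := by
  have hb : 0 < b := lt_trans ha hab
  set e := a.factorization 2 with he
  have hef : a.factorization 2 = b.factorization 2 := by unfold rul at h; omega
  have hra : rul a = e + 1 := by unfold rul; omega
  have hda : 2 ^ e ∣ a := Nat.ordProj_dvd a 2
  have hdb : 2 ^ e ∣ b := by rw [he, hef]; exact Nat.ordProj_dvd b 2
  have hna : ¬ 2 ^ (e + 1) ∣ a := by
    intro hd
    have := le_rul_of_dvd (by omega) hd
    omega
  have hnb : ¬ 2 ^ (e + 1) ∣ b := by
    intro hd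
    have := le_rul_of_dvd (by omega) hd
    unfold rul at this
    omega
  obtain ⟨u, hu⟩ := hda
  obtain ⟨w, hw⟩ := hdb
  have hpe : 0 < 2 ^ e := Nat.pow_pos (by norm_num)
  have hu1 : ¬ 2 ∣ u := by
    intro ⟨u', hu'⟩; exact hna ⟨u', by rw [hu, hu']; ring⟩
  have hw1 : ¬ 2 ∣ w := by
    intro ⟨w', hw'⟩; exact hnb ⟨w', by rw [hw, hw']; ring⟩
  have huw : u < w := by
    rcases Nat.lt_or_ge u w with h' | h'
    · exact h'
    · exfalso; have : b ≤ a := by rw [hu, hw]; exact Nat.mul_le_mul_left _ h'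
      omega
  have huw2 : u + 2 ≤ w := by omega
  refine ⟨2 ^ e * (u + 1), ?_, ?_, ?_⟩
  · rw [hu]; exact (Nat.mul_lt_mul_left hpe).mpr (by omega)
  · rw [hw]; exact (Nat.mul_lt_mul_left hpe).mpr (by omega)
  · have hd : 2 ^ (e+1) ∣ 2 ^ e * (u+1) := by
      obtain ⟨z, hz⟩ : 2 ∣ (u+1) := by omega
      exact ⟨z, by rw [pow_succ, hz]; ring⟩
    have h2 := le_rul_of_dvd (by positivity) hd
    omega

/-! ### IVT for walks -/

lemma walk_ivt {V : Type*} {G : SimpleGraph V} (φ : V → ℕ) :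
    ∀ {u v : V} (p : G.Walk u v),
      (∀ a b, a ∈ p.support → b ∈ p.support → G.Adj a b → φ a ≤ φ b + 1 ∧ φ b ≤ φ a + 1) →
      ∀ c, ((φ u ≤ c ∧ c ≤ φ v) ∨ (φ v ≤ c ∧ c ≤ φ u)) →
      ∃ w ∈ p.support, φ w = c := by
  intro u v p
  induction p with
  | nil =>
    intro _ c hc
    refine ⟨_, SimpleGraph.Walk.start_mem_support _, ?_⟩
    omega
  | @cons u u' v h q ih =>
    intro hl c hc
    by_cases hcu : φ u = c
    · exact ⟨u, SimpleGraph.Walk.start_mem_support _, hcu⟩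
    · have hsub : ∀ w, w ∈ q.support → w ∈ (SimpleGraph.Walk.cons h q).support := by
        intro w hw; rw [SimpleGraph.Walk.support_cons]; exact List.mem_cons_of_mem _ hw
      have hlip := hl u u' (SimpleGraph.Walk.start_mem_support _)
        (hsub u' (SimpleGraph.Walk.start_mem_support _)) h
      obtain ⟨w, hw, hwc⟩ := ih (fun a b ha hb => hl a b (hsub a ha) (hsub b hb))
        c (by omega)
      exact ⟨w, hsub w hw, hwc⟩

/-! ### The main upper-bound tool -/

lemma mainTool {V : Type*} {G : SimpleGraph V} (K : ℕ) (s : V) (φ : V → ℕ)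
    (f : V → ℕ)
    (hfs : f s = K)
    (hmax : ∀ v, v ≠ s → f v < K)
    (hpos : ∀ v, 1 ≤ f v)
    (hφpos : ∀ v, v ≠ s → 1 ≤ φ v)
    (hlip : ∀ u v, G.Adj u v → u ≠ s → v ≠ s → φ u ≤ φ v + 1 ∧ φ v ≤ φ u + 1)
    (hinj : ∀ u v, u ≠ s → v ≠ s → φ u = φ v → u = v)
    (hfg : ∀ v, v ≠ s → f v = rul (φ v)) :
    IsRanking G K f := by
  constructor
  · intro v
    refine ⟨hpos v, ?_⟩
    by_cases hv : v = s
    · rw [hv, hfs]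
    · exact le_of_lt (hmax v hv)
  · intro u v p hp huv hf
    by_cases hus : u = s
    · subst hus
      have := hmax v huv.symm
      rw [hfs] at hf; omega
    by_cases hvs : v = s
    · subst hvs
      have := hmax u huv
      rw [hfs] at hf; omega
    by_cases hsp : s ∈ p.support
    · exact ⟨s, hsp, by rw [hfs]; exact hmax u hus⟩
    · -- all support avoids s
      have hφne : φ u ≠ φ v := fun h => huv (hinj u v hus hvs h)
      have hlip' : ∀ a b, a ∈ p.support → b ∈ p.support → G.Adj a b →
          φ a ≤ φ b + 1 ∧ φ b ≤ φ a + 1 := by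
        intro a b ha hb hadj
        exact hlip a b hadj (fun h => hsp (h ▸ ha)) (fun h => hsp (h ▸ hb))
      have hru : rul (φ u) = rul (φ v) := by
        rw [← hfg u hus, ← hfg v hvs, hf]
      rcases Nat.lt_or_ge (φ u) (φ v) with hlt | hge
      · obtain ⟨c, hc1, hc2, hc3⟩ := rul_gap (hφpos u hus) hlt hru
        obtain ⟨w, hw, hwc⟩ := walk_ivt φ p hlip' c (by omega)
        have hws : w ≠ s := fun h => hsp (h ▸ hw)
        refine ⟨w, hw, ?_⟩
        rw [hfg u hus, hfg w hws, hwc]; exact hc3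
      · have hlt : φ v < φ u := by omega
        obtain ⟨c, hc1, hc2, hc3⟩ := rul_gap (hφpos v hvs) hlt hru.symm
        obtain ⟨w, hw, hwc⟩ := walk_ivt φ p hlip' c (by omega)
        have hws : w ≠ s := fun h => hsp (h ▸ hw)
        refine ⟨w, hw, ?_⟩
        rw [hf, hfg v hvs, hfg w hws, hwc]; exact hc3

section LB

open SimpleGraph

variable {k t : ℕ}

/-- ranking property alone -/
def RankProp {V : Type*} (G : SimpleGraph V) (f : V → ℕ) : Prop :=
  ∀ ⦃u v : V⦄ (p : G.Walk u v), p.IsPath → u ≠ v → f u = f v →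
    ∃ w ∈ p.support, f u < f w

lemma rank_wit {V : Type*} {G : SimpleGraph V} {f : V → ℕ} (hr : RankProp G f)
    {u v : V} (huv : u ≠ v) (hf : f u = f v) (p : G.Walk u v) :
    ∃ w ∈ p.support, f u < f w := by
  classical
  obtain ⟨w, hw, hfw⟩ := hr p.bypass p.bypass_isPath huv hf
  exact ⟨w, p.support_bypass_subset hw, hfw⟩

lemma R_adj_succ {i j : Fin (2^(k-2)+1+t)} (h : i.val + 1 = j.val) :
    (Rgraph k t).Adj i j := by
  rw [Rgraph, SimpleGraph.fromRel_adj]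
  exact ⟨by intro he; rw [he] at h; omega, Or.inl (Or.inl h)⟩

lemma R_adj_chord (hk : 3 ≤ k) (ht : t ≤ 2^(k-2) - 2) {i j : Fin (2^(k-2)+1+t)}
    (hi : i.val = t) (hj : j.val = 2^(k-2)) : (Rgraph k t).Adj i j := by
  have hm : 2 ≤ 2^(k-2) := by
    calc 2 = 2^1 := rfl
    _ ≤ 2^(k-2) := Nat.pow_le_pow_right (by norm_num) (by omega)
  rw [Rgraph, SimpleGraph.fromRel_adj]
  refine ⟨?_, Or.inl (Or.inr ⟨hi, hj⟩)⟩
  intro he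
  rw [he, hj] at hi
  omega

lemma chain_walk : ∀ (d : ℕ) (u v : Fin (2^(k-2)+1+t)), u.val + d = v.val →
    ∃ p : (Rgraph k t).Walk u v, ∀ w ∈ p.support, u.val ≤ w.val ∧ w.val ≤ v.val := by
  intro d
  induction d with
  | zero =>
    intro u v huv
    have : u = v := Fin.ext (by omega)
    subst this
    exact ⟨SimpleGraph.Walk.nil, by
      intro w hw
      rw [SimpleGraph.Walk.support_nil] at hw
      simp at hw
      omega⟩
  | succ d ih =>
    intro u v huv
    have hv := v.isLt
    have hu1 : u.val + 1 < 2^(k-2)+1+t := by omega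
    set u' : Fin (2^(k-2)+1+t) := ⟨u.val + 1, hu1⟩ with hu'
    obtain ⟨p, hp⟩ := ih u' v (by simp [hu']; omega)
    refine ⟨SimpleGraph.Walk.cons (R_adj_succ rfl) p, ?_⟩
    intro w hw
    rw [SimpleGraph.Walk.support_cons] at hw
    rcases List.mem_cons.mp hw with h | h
    · subst h; omega
    · have := hp w h
      simp [hu'] at this
      omega

lemma interval_walk (a b : ℕ) {u v : Fin (2^(k-2)+1+t)}
    (hu : a ≤ u.val ∧ u.val ≤ b) (hv : a ≤ v.val ∧ v.val ≤ b) :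
    ∃ p : (Rgraph k t).Walk u v, ∀ w ∈ p.support, a ≤ w.val ∧ w.val ≤ b := by
  rcases le_or_gt u.val v.val with h | h
  · obtain ⟨p, hp⟩ := chain_walk (v.val - u.val) u v (by omega)
    exact ⟨p, fun w hw => by have := hp w hw; omega⟩
  · obtain ⟨p, hp⟩ := chain_walk (u.val - v.val) v u (by omega)
    refine ⟨p.reverse, fun w hw => ?_⟩
    rw [SimpleGraph.Walk.support_reverse, List.mem_reverse] at hw
    have := hp w hw; omega

lemma exists_max_on {n : ℕ} (P : Fin n → Prop) (hne : ∃ i, P i) (f : Fin n → ℕ) :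
    ∃ p, P p ∧ ∀ i, P i → f i ≤ f p := by
  classical
  obtain ⟨i0, hi0⟩ := hne
  obtain ⟨p, hp, hmax⟩ := Finset.exists_max_image (Finset.univ.filter P) f
    ⟨i0, by simp [hi0]⟩
  refine ⟨p, by simpa using hp, fun i hi => hmax i (by simp [hi])⟩

section Shapes

variable (hk : 3 ≤ k) (ht : t ≤ 2^(k-2) - 2)
variable {f : Fin (2^(k-2)+1+t) → ℕ}
variable (hr : RankProp (Rgraph k t) f) (hpos : ∀ v, 1 ≤ f v)

include hpos hr in
lemma run_lb (j : ℕ) : ∀ a b : ℕ, a ≤ b → b < 2^(k-2)+1+t →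
    (∀ i : Fin (2^(k-2)+1+t), a ≤ i.val → i.val ≤ b → f i ≤ j) →
    b + 2 ≤ a + 2^j := by
  induction j with
  | zero =>
    intro a b hab hb hlab
    have h1 := hlab ⟨a, by omega⟩ (le_refl a) hab
    have h2 := hpos ⟨a, by omega⟩
    omega
  | succ j ih =>
    intro a b hab hb hlab
    have h2p : (2:ℕ)^(j+1) = 2^j + 2^j := by rw [pow_succ]; omega
    have h1p : 1 ≤ 2^j := Nat.one_le_two_pow
    obtain ⟨p, hp, hmax⟩ := exists_max_on (fun i => a ≤ i.val ∧ i.val ≤ b)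
      ⟨⟨a, by omega⟩, by constructor <;> simp <;> omega⟩ f
    have huniq : ∀ i : Fin (2^(k-2)+1+t), a ≤ i.val → i.val ≤ b → i ≠ p → f i < f p := by
      intro i hia hib hip
      rcases Nat.lt_or_ge (f i) (f p) with h | h
      · exact h
      · exfalso
        have hfi : f i = f p := le_antisymm (hmax i ⟨hia, hib⟩) h
        obtain ⟨q, hq⟩ := interval_walk a b ⟨hia, hib⟩ hp
        obtain ⟨w, hw, hfw⟩ := rank_wit hr hip hfi q
        have := hmax w (hq w hw)
        omega
    have hMle : f p ≤ j + 1 := hlab p hp.1 hp.2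
    have hleft : p.val + 1 ≤ a + 2^j := by
      rcases Nat.eq_or_lt_of_le hp.1 with h | h
      · omega
      · have := ih a (p.val - 1) (by omega) (by omega) (fun i hia hib => by
          have := huniq i hia (by omega) (by intro he; rw [he] at hib; omega)
          omega)
        omega
    have hright : b + 1 ≤ p.val + 2^j := by
      rcases Nat.eq_or_lt_of_le hp.2 with h | h
      · omega
      · have := ih (p.val + 1) b (by omega) (by omega) (fun i hia hib => by
          have := huniq i (by omega) hib (by intro he; rw [he] at hia; omega)
          omega)
        omega
    omega

include hk ht in
lemma D_walk (a b c d : ℕ) (h1 : a ≤ t) (h2 : t ≤ b) (h3 : b < c) (h4 : c ≤ 2^(k-2))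
    (h5 : 2^(k-2) ≤ d) (h6 : d < 2^(k-2)+1+t)
    {u v : Fin (2^(k-2)+1+t)}
    (hu : (a ≤ u.val ∧ u.val ≤ b) ∨ (c ≤ u.val ∧ u.val ≤ d))
    (hv : (a ≤ v.val ∧ v.val ≤ b) ∨ (c ≤ v.val ∧ v.val ≤ d)) :
    ∃ p : (Rgraph k t).Walk u v,
      ∀ w ∈ p.support, (a ≤ w.val ∧ w.val ≤ b) ∨ (c ≤ w.val ∧ w.val ≤ d) := by
  have hm : 2 ≤ 2^(k-2) := by
    calc 2 = 2^1 := rfl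
    _ ≤ 2^(k-2) := Nat.pow_le_pow_right (by norm_num) (by omega)
  set tv : Fin (2^(k-2)+1+t) := ⟨t, by omega⟩ with htv
  set mv : Fin (2^(k-2)+1+t) := ⟨2^(k-2), by omega⟩ with hmv
  have hcross : ∀ (u' v' : Fin (2^(k-2)+1+t)), (a ≤ u'.val ∧ u'.val ≤ b) →
      (c ≤ v'.val ∧ v'.val ≤ d) →
      ∃ p : (Rgraph k t).Walk u' v',
      ∀ w ∈ p.support, (a ≤ w.val ∧ w.val ≤ b) ∨ (c ≤ w.val ∧ w.val ≤ d) := by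
    intro u' v' hu' hv'
    obtain ⟨p1, hp1⟩ := interval_walk a b hu' (⟨h1, h2⟩ : a ≤ tv.val ∧ tv.val ≤ b)
    obtain ⟨p2, hp2⟩ := interval_walk c d (⟨h4, h5⟩ : c ≤ mv.val ∧ mv.val ≤ d) hv'
    have hadj : (Rgraph k t).Adj tv mv := R_adj_chord hk ht rfl rfl
    refine ⟨p1.append (SimpleGraph.Walk.cons hadj p2), ?_⟩
    intro w hw
    rw [SimpleGraph.Walk.mem_support_append_iff] at hw
    rcases hw with hw | hw
    · exact Or.inl (hp1 w hw)
    · rw [SimpleGraph.Walk.support_cons] at hw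
      rcases List.mem_cons.mp hw with hw | hw
      · subst hw; exact Or.inl ⟨h1, h2⟩
      · exact Or.inr (hp2 w hw)
  rcases hu with hu' | hu' <;> rcases hv with hv' | hv'
  · obtain ⟨p, hp⟩ := interval_walk a b hu' hv'
    exact ⟨p, fun w hw => Or.inl (hp w hw)⟩
  · exact hcross u v hu' hv'
  · obtain ⟨p, hp⟩ := hcross v u hv' hu'
    refine ⟨p.reverse, fun w hw => ?_⟩
    rw [SimpleGraph.Walk.support_reverse, List.mem_reverse] at hw
    exact hp w hw
  · obtain ⟨p, hp⟩ := interval_walk c d hu' hv'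
    exact ⟨p, fun w hw => Or.inr (hp w hw)⟩

end Shapes

end LB

section LB2

open SimpleGraph

variable {k t : ℕ}
variable (hk : 3 ≤ k) (ht : t ≤ 2^(k-2) - 2)
variable {f : Fin (2^(k-2)+1+t) → ℕ}
variable (hr : RankProp (Rgraph k t) f) (hpos : ∀ v, 1 ≤ f v)

include hr hpos in
lemma run_contra (j a' b' : ℕ) (hab : a' ≤ b') (hb : b' < 2^(k-2)+1+t)
    (hsub : ∀ i : Fin (2^(k-2)+1+t), a' ≤ i.val → i.val ≤ b' → f i ≤ j)
    (hsz : a' + 2^j ≤ b' + 1) : False := by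
  have := run_lb hr hpos j a' b' hab hb hsub
  omega

include hk ht hr hpos in
lemma D_lb (j : ℕ) : ∀ a b c d : ℕ, a ≤ t → t ≤ b → b + 1 < c → c ≤ 2^(k-2) →
    2^(k-2) ≤ d → d < 2^(k-2)+1+t →
    (∀ i : Fin (2^(k-2)+1+t),
      (a ≤ i.val ∧ i.val ≤ b) ∨ (c ≤ i.val ∧ i.val ≤ d) → f i ≤ j) →
    ((b - t) + (2^(k-2) - c) + 2 + min (t - a) (d - 2^(k-2)) ≥ 2^j ∨
      b - a + 1 ≥ 2^j ∨ d - c + 1 ≥ 2^j) →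
    False := by
  have hm : 2 ≤ 2^(k-2) := by
    calc 2 = 2^1 := rfl
    _ ≤ 2^(k-2) := Nat.pow_le_pow_right (by norm_num) (by omega)
  induction j with
  | zero =>
    intro a b c d h1 h2 h3 h4 h5 h6 hlab _
    have ha := hlab ⟨t, by omega⟩ (Or.inl ⟨h1, h2⟩)
    have hb := hpos ⟨t, by omega⟩
    omega
  | succ j ih =>
    intro a b c d h1 h2 h3 h4 h5 h6 hlab good
    have h2p : (2:ℕ)^(j+1) = 2^j + 2^j := by rw [pow_succ]; omega
    have h1p : 1 ≤ 2^j := Nat.one_le_two_pow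
    obtain ⟨p, hp, hmax⟩ := exists_max_on
      (fun i : Fin (2^(k-2)+1+t) => (a ≤ i.val ∧ i.val ≤ b) ∨ (c ≤ i.val ∧ i.val ≤ d))
      ⟨⟨t, by omega⟩, Or.inl ⟨h1, h2⟩⟩ f
    have huniq : ∀ i : Fin (2^(k-2)+1+t),
        ((a ≤ i.val ∧ i.val ≤ b) ∨ (c ≤ i.val ∧ i.val ≤ d)) → i.val ≠ p.val →
        f i < f p := by
      intro i hi hip
      rcases Nat.lt_or_ge (f i) (f p) with h | h
      · exact h
      · exfalso
        have hfi : f i = f p := le_antisymm (hmax i hi) h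
        obtain ⟨q, hq⟩ := D_walk hk ht a b c d h1 h2 (by omega) h4 h5 h6 hi hp
        obtain ⟨w, hw, hfw⟩ := rank_wit hr (fun he => hip (congrArg Fin.val he)) hfi q
        have := hmax w (hq w hw)
        omega
    have hMle : f p ≤ j + 1 := hlab p hp
    set q := p.val with hqdef
    rcases hp with ⟨hq1, hq2⟩ | ⟨hq1, hq2⟩
    · -- p in left interval [a, b]
      rcases Nat.lt_trichotomy q t with hqt | hqt | hqt
      · -- a ≤ q < t : outer leg
        by_cases hrun : a + 2^j ≤ q
        · exact run_contra hr hpos j a (q-1) (by omega) (by omega)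
            (fun i hia hib => by
              have := huniq i (Or.inl ⟨hia, by omega⟩) (by omega); omega)
            (by omega)
        · exact ih (q+1) b c d (by omega) h2 h3 h4 h5 h6
            (fun i hi => by
              have hine : i.val ≠ q := by rcases hi with ⟨l1,l2⟩|⟨l1,l2⟩ <;> omega
              have hmem : (a ≤ i.val ∧ i.val ≤ b) ∨ (c ≤ i.val ∧ i.val ≤ d) := by
                rcases hi with ⟨l1,l2⟩|⟨l1,l2⟩
                · exact Or.inl ⟨by omega, by omega⟩
                · exact Or.inr ⟨by omega, by omega⟩
              have := huniq i hmem hine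
              omega)
            (by omega)
      · -- q = t
        have hbig : t - a ≥ 2^j ∨ b - t ≥ 2^j ∨ d - c + 1 ≥ 2^j := by omega
        rcases hbig with hbg | hbg | hbg
        · exact run_contra hr hpos j a (t-1) (by omega) (by omega)
            (fun i hia hib => by
              have := huniq i (Or.inl ⟨hia, by omega⟩) (by omega); omega)
            (by omega)
        · exact run_contra hr hpos j (t+1) b (by omega) (by omega)
            (fun i hia hib => by
              have := huniq i (Or.inl ⟨by omega, hib⟩) (by omega); omega)
            (by omega)
        · exact run_contra hr hpos j c d (by omega) (by omega)
            (fun i hia hib => by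
              have := huniq i (Or.inr ⟨hia, hib⟩) (by omega); omega)
            (by omega)
      · -- t < q ≤ b : inner leg at t side
        by_cases hrun : q + 2^j ≤ b
        · exact run_contra hr hpos j (q+1) b (by omega) (by omega)
            (fun i hia hib => by
              have := huniq i (Or.inl ⟨by omega, hib⟩) (by omega); omega)
            (by omega)
        · exact ih a (q-1) c d h1 (by omega) (by omega) h4 h5 h6
            (fun i hi => by
              have hine : i.val ≠ q := by rcases hi with ⟨l1,l2⟩|⟨l1,l2⟩ <;> omega
              have hmem : (a ≤ i.val ∧ i.val ≤ b) ∨ (c ≤ i.val ∧ i.val ≤ d) := by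
                rcases hi with ⟨l1,l2⟩|⟨l1,l2⟩
                · exact Or.inl ⟨by omega, by omega⟩
                · exact Or.inr ⟨by omega, by omega⟩
              have := huniq i hmem hine
              omega)
            (by omega)
    · -- p in right interval [c, d]
      rcases Nat.lt_trichotomy q (2^(k-2)) with hqm | hqm | hqm
      · -- c ≤ q < m : inner leg at m side
        by_cases hrun : c + 2^j ≤ q
        · exact run_contra hr hpos j c (q-1) (by omega) (by omega)
            (fun i hia hib => by
              have := huniq i (Or.inr ⟨hia, by omega⟩) (by omega); omega)
            (by omega)
        · exact ih a b (q+1) d h1 h2 (by omega) (by omega) h5 h6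
            (fun i hi => by
              have hine : i.val ≠ q := by rcases hi with ⟨l1,l2⟩|⟨l1,l2⟩ <;> omega
              have hmem : (a ≤ i.val ∧ i.val ≤ b) ∨ (c ≤ i.val ∧ i.val ≤ d) := by
                rcases hi with ⟨l1,l2⟩|⟨l1,l2⟩
                · exact Or.inl ⟨by omega, by omega⟩
                · exact Or.inr ⟨by omega, by omega⟩
              have := huniq i hmem hine
              omega)
            (by omega)
      · -- q = m
        have hbig : 2^(k-2) - c ≥ 2^j ∨ d - 2^(k-2) ≥ 2^j ∨ b - a + 1 ≥ 2^j := by omega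
        rcases hbig with hbg | hbg | hbg
        · exact run_contra hr hpos j c (2^(k-2)-1) (by omega) (by omega)
            (fun i hia hib => by
              have := huniq i (Or.inr ⟨hia, by omega⟩) (by omega); omega)
            (by omega)
        · exact run_contra hr hpos j (2^(k-2)+1) d (by omega) (by omega)
            (fun i hia hib => by
              have := huniq i (Or.inr ⟨by omega, hib⟩) (by omega); omega)
            (by omega)
        · exact run_contra hr hpos j a b (by omega) (by omega)
            (fun i hia hib => by
              have := huniq i (Or.inl ⟨hia, hib⟩) (by omega); omega)
            (by omega)
      · -- m < q ≤ d : outer leg at m side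
        by_cases hrun : q + 2^j ≤ d
        · exact run_contra hr hpos j (q+1) d (by omega) (by omega)
            (fun i hia hib => by
              have := huniq i (Or.inr ⟨by omega, hib⟩) (by omega); omega)
            (by omega)
        · exact ih a b c (q-1) h1 h2 h3 h4 (by omega) (by omega)
            (fun i hi => by
              have hine : i.val ≠ q := by rcases hi with ⟨l1,l2⟩|⟨l1,l2⟩ <;> omega
              have hmem : (a ≤ i.val ∧ i.val ≤ b) ∨ (c ≤ i.val ∧ i.val ≤ d) := by
                rcases hi with ⟨l1,l2⟩|⟨l1,l2⟩
                · exact Or.inl ⟨by omega, by omega⟩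
                · exact Or.inr ⟨by omega, by omega⟩
              have := huniq i hmem hine
              omega)
            (by omega)

include hk ht hr hpos in
lemma cyc_lb (j : ℕ) : ∀ σ τ : ℕ, σ ≤ t → τ ≤ t →
    (∀ i : Fin (2^(k-2)+1+t), t - σ ≤ i.val → i.val ≤ 2^(k-2) + τ → f i ≤ j) →
    (2 * ((2^(k-2) - t) + min σ τ) ≥ 2^j ∨ (2^(k-2) - t) + max σ τ ≥ 2^j) →
    False := by
  have hm : 2 ≤ 2^(k-2) := by
    calc 2 = 2^1 := rfl
    _ ≤ 2^(k-2) := Nat.pow_le_pow_right (by norm_num) (by omega)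
  induction j with
  | zero =>
    intro σ τ h1 h2 hlab _
    have ha := hlab ⟨t, by omega⟩ (by show t - σ ≤ t; omega) (by show t ≤ 2^(k-2)+τ; omega)
    have hb := hpos ⟨t, by omega⟩
    omega
  | succ j ih =>
    intro σ τ h1 h2 hlab good
    have h2p : (2:ℕ)^(j+1) = 2^j + 2^j := by rw [pow_succ]; omega
    have h1p : 1 ≤ 2^j := Nat.one_le_two_pow
    by_cases hd2 : (2^(k-2) - t) + max σ τ ≥ 2^(j+1)
    · -- a long run exists at the same level
      rcases le_or_gt σ τ with hστ | hστ
      · exact run_contra hr hpos (j+1) (t+1) (2^(k-2)+τ) (by omega) (by omega)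
          (fun i hia hib => hlab i (by omega) hib) (by omega)
      · exact run_contra hr hpos (j+1) (t-σ) (2^(k-2)-1) (by omega) (by omega)
          (fun i hia hib => hlab i hia (by omega)) (by omega)
    · have good1 : (2^(k-2) - t) + min σ τ ≥ 2^j := by omega
      obtain ⟨p, hp, hmax⟩ := exists_max_on
        (fun i : Fin (2^(k-2)+1+t) => t - σ ≤ i.val ∧ i.val ≤ 2^(k-2) + τ)
        ⟨⟨t, by omega⟩, ⟨by show t - σ ≤ t; omega, by show t ≤ 2^(k-2)+τ; omega⟩⟩ f
      have huniq : ∀ i : Fin (2^(k-2)+1+t),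
          (t - σ ≤ i.val ∧ i.val ≤ 2^(k-2) + τ) → i.val ≠ p.val → f i < f p := by
        intro i hi hip
        rcases Nat.lt_or_ge (f i) (f p) with h | h
        · exact h
        · exfalso
          have hfi : f i = f p := le_antisymm (hmax i hi) h
          obtain ⟨q, hq⟩ := interval_walk (t-σ) (2^(k-2)+τ) hi hp
          obtain ⟨w, hw, hfw⟩ := rank_wit hr (fun he => hip (congrArg Fin.val he)) hfi q
          have := hmax w (hq w hw)
          omega
      have hMle : f p ≤ j + 1 := hlab p hp.1 hp.2
      set q := p.val with hqdef
      rcases Nat.lt_trichotomy q t with hqt | hqt | hqt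
      · -- in left tail: recurse CYC (t-q-1, τ)
        exact ih (t-q-1) τ (by omega) h2
          (fun i hia hib => by
            have := huniq i (⟨by omega, hib⟩) (by omega); omega)
          (by omega)
      · -- q = t : run [t+1, m+τ]
        exact run_contra hr hpos j (t+1) (2^(k-2)+τ) (by omega) (by omega)
          (fun i hia hib => by
            have := huniq i (⟨by omega, hib⟩) (by omega); omega)
          (by omega)
      · rcases Nat.lt_trichotomy q (2^(k-2)) with hqm | hqm | hqm
        · -- t < q < m : D shape
          exact D_lb hk ht hr hpos j (t-σ) (q-1) (q+1) (2^(k-2)+τ)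
            (by omega) (by omega) (by omega) (by omega) (by omega) (by omega)
            (fun i hi => by
              have hine : i.val ≠ q := by rcases hi with ⟨l1,l2⟩|⟨l1,l2⟩ <;> omega
              have hmem : t - σ ≤ i.val ∧ i.val ≤ 2^(k-2) + τ := by
                rcases hi with ⟨l1,l2⟩|⟨l1,l2⟩ <;> exact ⟨by omega, by omega⟩
              have := huniq i hmem hine
              omega)
            (by omega)
        · -- q = m : run [t-σ, m-1]
          exact run_contra hr hpos j (t-σ) (2^(k-2)-1) (by omega) (by omega)
            (fun i hia hib => by
              have := huniq i (⟨hia, by omega⟩) (by omega); omega)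
            (by omega)
        · -- in right tail: recurse CYC (σ, q-m-1)
          exact ih σ (q-2^(k-2)-1) h1 (by omega)
            (fun i hia hib => by
              have := huniq i (⟨hia, by omega⟩) (by omega); omega)
            (by omega)

end LB2

section LB3

open SimpleGraph

variable {k t : ℕ}

lemma induce_adj_iff {x : Fin (2^(k-2)+1+t)} {u v : ↥{w : Fin (2^(k-2)+1+t) | w ≠ x}} :
    ((Rgraph k t).induce {w | w ≠ x}).Adj u v ↔ (Rgraph k t).Adj u.val v.val := by
  simp [SimpleGraph.comap_adj]

lemma induced_walk {x : Fin (2^(k-2)+1+t)} :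
    ∀ {u v : Fin (2^(k-2)+1+t)} (p : (Rgraph k t).Walk u v)
      (hs : ∀ w ∈ p.support, w ≠ x) (hu : u ≠ x) (hv : v ≠ x),
      ∃ q : ((Rgraph k t).induce {w | w ≠ x}).Walk ⟨u, hu⟩ ⟨v, hv⟩,
        q.support.map Subtype.val = p.support := by
  intro u v p
  induction p with
  | nil =>
    intro _ hu _
    exact ⟨SimpleGraph.Walk.nil, by simp⟩
  | @cons u u' v h q ih =>
    intro hs hu hv
    have hsub : ∀ w ∈ q.support, w ≠ x := by
      intro w hw
      exact hs w (by rw [SimpleGraph.Walk.support_cons]; exact List.mem_cons_of_mem _ hw)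
    have hu' : u' ≠ x := hsub u' (SimpleGraph.Walk.start_mem_support _)
    obtain ⟨q', hq'⟩ := ih hsub hu' hv
    have hadj : ((Rgraph k t).induce {w | w ≠ x}).Adj ⟨u, hu⟩ ⟨u', hu'⟩ :=
      induce_adj_iff.mpr h
    refine ⟨SimpleGraph.Walk.cons hadj q', ?_⟩
    rw [SimpleGraph.Walk.support_cons, SimpleGraph.Walk.support_cons, List.map_cons, hq']

lemma lb_main (hk : 3 ≤ k) (ht : t ≤ 2^(k-2) - 2) (x : Fin (2^(k-2)+1+t)) (j : ℕ)
    {f0 : ↥{w : Fin (2^(k-2)+1+t) | w ≠ x} → ℕ}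
    (hrank : IsRanking ((Rgraph k t).induce {w | w ≠ x}) j f0) : k - 1 ≤ j := by
  by_contra hcon
  push_neg at hcon
  have hjk : j ≤ k - 2 := by omega
  have hm : 2 ≤ 2^(k-2) := by
    calc 2 = 2^1 := rfl
    _ ≤ 2^(k-2) := Nat.pow_le_pow_right (by norm_num) (by omega)
  classical
  set f : Fin (2^(k-2)+1+t) → ℕ :=
    fun v => if h : v = x then k - 1 else f0 ⟨v, h⟩ with hfdef
  have hfx : f x = k - 1 := by simp [hfdef]
  have hfne : ∀ (v : Fin (2^(k-2)+1+t)) (h : v ≠ x), f v = f0 ⟨v, h⟩ := by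
    intro v h; simp [hfdef, h]
  have hbd : ∀ (v : Fin (2^(k-2)+1+t)) (h : v ≠ x), f v ≤ k - 2 := by
    intro v h
    rw [hfne v h]
    have := (hrank.1 ⟨v, h⟩).2
    omega
  have hpos : ∀ v, 1 ≤ f v := by
    intro v
    by_cases h : v = x
    · rw [h, hfx]; omega
    · rw [hfne v h]; exact (hrank.1 ⟨v, h⟩).1
  have hr : RankProp (Rgraph k t) f := by
    intro u v p hp huv hfeq
    by_cases hux : u = x
    · have hvx : v ≠ x := fun he => huv (hux.trans he.symm)
      have h1 := hbd v hvx
      have h2 : f u = k - 1 := by rw [hux]; exact hfx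
      omega
    by_cases hvx : v = x
    · have h1 := hbd u hux
      have h2 : f v = k - 1 := by rw [hvx]; exact hfx
      omega
    by_cases hxp : x ∈ p.support
    · refine ⟨x, hxp, ?_⟩
      have := hbd u hux
      rw [hfx]
      omega
    · have hs : ∀ w ∈ p.support, w ≠ x := fun w hw he => hxp (he ▸ hw)
      obtain ⟨q, hq⟩ := induced_walk p hs hux hvx
      have hqpath : q.IsPath := by
        rw [SimpleGraph.Walk.isPath_def]
        have hnd : (q.support.map Subtype.val).Nodup := by
          rw [hq]; exact hp.support_nodup
        exact hnd.of_map _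
      have hne : (⟨u, hux⟩ : ↥{w | w ≠ x}) ≠ ⟨v, hvx⟩ := by
        intro he
        exact huv (congrArg Subtype.val he)
      have hfeq' : f0 ⟨u, hux⟩ = f0 ⟨v, hvx⟩ := by
        rw [← hfne u hux, ← hfne v hvx]; exact hfeq
      obtain ⟨w, hw, hlt⟩ := hrank.2 q hqpath hne hfeq'
      refine ⟨w.val, ?_, ?_⟩
      · rw [← hq]; exact List.mem_map_of_mem hw
      · rw [hfne u hux, hfne w.val w.2]
        convert hlt
  -- now apply the cycle lemma to the full graph
  have h2 : (2:ℕ)^(k-1) = 2^(k-2) + 2^(k-2) := by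
    have : k - 1 = (k-2) + 1 := by omega
    rw [this, pow_succ]; omega
  exact cyc_lb hk ht hr hpos (k-1) t t (le_refl t) (le_refl t)
    (fun i _ _ => by
      by_cases h : i = x
      · rw [h, hfx]
      · have := hbd i h; omega)
    (by left; omega)

end LB3

section UB

open SimpleGraph

variable {k t : ℕ}

lemma not_dvd_helper {m c : ℕ} (h0 : 0 < c) (h3 : c < 3*m) (h1 : c ≠ m) (h2 : c ≠ 2*m) :
    ¬ m ∣ c := by
  rintro ⟨e, he⟩
  have he3 : e < 3 := by
    by_contra hcon
    push_neg at hcon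
    have : m * 3 ≤ m * e := Nat.mul_le_mul_left m hcon
    omega
  interval_cases e <;> omega

lemma ub_generic (hk : 3 ≤ k) (x : Fin (2^(k-2)+1+t))
    (s : ↥{w : Fin (2^(k-2)+1+t) | w ≠ x}) (φ : ↥{w : Fin (2^(k-2)+1+t) | w ≠ x} → ℕ)
    (hbasic : ∀ v, v ≠ s →
      1 ≤ φ v ∧ φ v < 3*2^(k-2) ∧ φ v ≠ 2^(k-2) ∧ φ v ≠ 2*2^(k-2))
    (hlip : ∀ u v, (Rgraph k t).Adj u.val v.val → u ≠ s → v ≠ s →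
      φ u ≤ φ v + 1 ∧ φ v ≤ φ u + 1)
    (hinj : ∀ u v, u ≠ s → v ≠ s → φ u = φ v → u = v) :
    ∃ f, IsRanking ((Rgraph k t).induce {w | w ≠ x}) (k-1) f := by
  classical
  have hrul : ∀ v, v ≠ s → rul (φ v) ≤ k - 2 := by
    intro v hv
    obtain ⟨hb1, hb2, hb3, hb4⟩ := hbasic v hv
    refine rul_le_of_not_dvd (by omega) (not_dvd_helper hb1 ?_ hb3 ?_)
    · calc φ v < 3*2^(k-2) := hb2
      _ = 3*2^(k-2) := rfl
    · intro h; exact hb4 (by omega)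
  refine ⟨fun v => if v = s then k-1 else rul (φ v), ?_⟩
  refine mainTool (k-1) s φ _ (if_pos rfl) ?_ ?_ ?_ ?_ hinj ?_
  · intro v hv
    rw [if_neg hv]
    have := hrul v hv
    omega
  · intro v
    by_cases hv : v = s
    · rw [if_pos hv]; omega
    · rw [if_neg hv]; exact rul_pos _
  · intro v hv
    exact (hbasic v hv).1
  · intro u v hadj hu hv
    exact hlip u v (induce_adj_iff.mp hadj) hu hv
  · intro v hv
    rw [if_neg hv]

lemma ub_main (hk : 3 ≤ k) (ht : t ≤ 2^(k-2) - 2) (x : Fin (2^(k-2)+1+t)) :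
    ∃ f, IsRanking ((Rgraph k t).induce {w | w ≠ x}) (k-1) f := by
  classical
  have hm : 2 ≤ 2^(k-2) := by
    calc 2 = 2^1 := rfl
    _ ≤ 2^(k-2) := Nat.pow_le_pow_right (by norm_num) (by omega)
  have hxlt := x.isLt
  -- generic facts for vertices
  have valne : ∀ v : ↥{w : Fin (2^(k-2)+1+t) | w ≠ x}, (v.val.val : ℕ) ≠ x.val := by
    intro v h
    exact v.2 (Fin.ext h)
  by_cases hx : x.val < 2^(k-2)
  · -- exceptional vertex is m
    set s : ↥{w : Fin (2^(k-2)+1+t) | w ≠ x} :=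
      ⟨⟨2^(k-2), by omega⟩, fun h => by
        have := congrArg Fin.val h
        simp at this
        omega⟩ with hsdef
    have hsval : (s.val.val : ℕ) = 2^(k-2) := rfl
    have svalne : ∀ v : ↥{w : Fin (2^(k-2)+1+t) | w ≠ x}, v ≠ s →
        (v.val.val : ℕ) ≠ 2^(k-2) := by
      intro v hv h
      exact hv (Subtype.ext (Fin.ext (by rw [h, hsval])))
    refine ub_generic hk x s
      (fun v => if v.val.val < x.val then v.val.val + 1
        else if v.val.val < 2^(k-2) then 2^(k-2) + (v.val.val - x.val)
        else 2^(k-2) + 2^(k-2) + (v.val.val - 2^(k-2))) ?_ ?_ ?_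
    · intro v hv
      have h1 := v.val.isLt
      have h2 := valne v
      have h3 := svalne v hv
      split_ifs <;> (refine ⟨by omega, by omega, by omega, by omega⟩)
    · intro u v hadj hu hv
      have hu1 := u.val.isLt
      have hv1 := v.val.isLt
      have hu2 := valne u
      have hv2 := valne v
      have hu3 := svalne u hu
      have hv3 := svalne v hv
      rw [Rgraph, SimpleGraph.fromRel_adj] at hadj
      have hne : (u.val.val : ℕ) ≠ v.val.val := fun h => hadj.1 (Fin.ext h)
      have hrel := hadj.2
      split_ifs <;> omega
    · intro u v hu hv heq
      have hu1 := u.val.isLt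
      have hv1 := v.val.isLt
      have hu2 := valne u
      have hv2 := valne v
      have hu3 := svalne u hu
      have hv3 := svalne v hv
      apply Subtype.ext
      apply Fin.ext
      split_ifs at heq <;> omega
  · -- exceptional vertex is t
    push_neg at hx
    set s : ↥{w : Fin (2^(k-2)+1+t) | w ≠ x} :=
      ⟨⟨t, by omega⟩, fun h => by
        have := congrArg Fin.val h
        simp at this
        omega⟩ with hsdef
    have hsval : (s.val.val : ℕ) = t := rfl
    have svalne : ∀ v : ↥{w : Fin (2^(k-2)+1+t) | w ≠ x}, v ≠ s →
        (v.val.val : ℕ) ≠ t := by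
      intro v hv h
      exact hv (Subtype.ext (Fin.ext (by rw [h, hsval])))
    refine ub_generic hk x s
      (fun v => if v.val.val < t then 2^(k-2) + 1 + v.val.val
        else if v.val.val < x.val then v.val.val - t
        else 2^(k-2) + 2^(k-2) + (v.val.val - x.val)) ?_ ?_ ?_
    · intro v hv
      have h1 := v.val.isLt
      have h2 := valne v
      have h3 := svalne v hv
      split_ifs <;> (refine ⟨by omega, by omega, by omega, by omega⟩)
    · intro u v hadj hu hv
      have hu1 := u.val.isLt
      have hv1 := v.val.isLt
      have hu2 := valne u
      have hv2 := valne v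
      have hu3 := svalne u hu
      have hv3 := svalne v hv
      rw [Rgraph, SimpleGraph.fromRel_adj] at hadj
      have hne : (u.val.val : ℕ) ≠ v.val.val := fun h => hadj.1 (Fin.ext h)
      have hrel := hadj.2
      split_ifs <;> omega
    · intro u v hu hv heq
      have hu1 := u.val.isLt
      have hv1 := v.val.isLt
      have hu2 := valne u
      have hv2 := valne v
      have hu3 := svalne u hu
      have hv3 := svalne v hv
      apply Subtype.ext
      apply Fin.ext
      split_ifs at heq <;> omega

end UB


/-- For `k ≥ 3` and `0 ≤ t ≤ 2^(k-2) − 2`, deleting any vertex of `R_{k,t}` yields a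
graph of tree-depth exactly `k − 1`. -/
theorem treedepth_Rgraph_deleteVertex (k t : ℕ) (hk : 3 ≤ k)
    (ht : t ≤ 2 ^ (k - 2) - 2) (x : Fin (2 ^ (k - 2) + 1 + t)) :
    treedepth ((Rgraph k t).induce {w | w ≠ x}) = k - 1 := by
  obtain ⟨f, hf⟩ := ub_main hk ht x
  have hub : (k-1) ∈ {j | ∃ g, IsRanking ((Rgraph k t).induce {w | w ≠ x}) j g} := ⟨f, hf⟩
  refine le_antisymm (Nat.sInf_le hub) (le_csInf ⟨_, hub⟩ ?_)
  rintro j ⟨f0, hj⟩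
  exact lb_main hk ht x j hj
end

section
/- Let k ≥ 1 and 1 ≤ s ≤ k, let 1 ≤ q ≤ s, and let π_1 + … + π_q = s be a partition of s into positive integers. Let Q be the graph whose vertex set is the disjoint union of sets B_1, …, B_q with |B_i| = π_i and sets H_1, …, H_q each of size k − s, in which all vertices of B_1 ∪ … ∪ B_q are pairwise adjacent, each H_i induces a complete graph, and every vertex of B_i is adjacent to every vertex of H_i for each i (with no other adjacencies). Then td(Q) = k. -/
/-- The block index of a vertex of the graph `Q`: vertices are either in one of the
parts `B_i` of the central clique (left summand, `Sum.inl ⟨i, _⟩`) or in the outer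
clique `H_i` (right summand, `Sum.inr (i, _)`). -/
def qIdx {q h : ℕ} {π : Fin q → ℕ} : ((Σ i : Fin q, Fin (π i)) ⊕ (Fin q × Fin h)) → Fin q
  | Sum.inl x => x.1
  | Sum.inr x => x.1

/-- The graph `Q`: the central clique `B_1 ∪ ⋯ ∪ B_q` (with `|B_i| = π i`) together with
disjoint cliques `H_1, …, H_q` each of size `h`, where every vertex of `B_i` is joined to
every vertex of `H_i`. Two distinct vertices are adjacent iff they both lie in the
central clique, or they have the same block index. -/
def Qgraph (q h : ℕ) (π : Fin q → ℕ) :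
    SimpleGraph ((Σ i : Fin q, Fin (π i)) ⊕ (Fin q × Fin h)) where
  Adj x y := x ≠ y ∧ ((x.isLeft ∧ y.isLeft) ∨ qIdx x = qIdx y)
  symm := ⟨by
    rintro x y ⟨hne, h | h⟩
    · exact ⟨hne.symm, Or.inl ⟨h.2, h.1⟩⟩
    · exact ⟨hne.symm, Or.inr h.symm⟩⟩
  loopless := ⟨fun x hx => hx.1 rfl⟩

/-- Any walk between right-summand vertices in different blocks passes through a
left-summand vertex. -/
lemma walk_has_left {q h : ℕ} {π : Fin q → ℕ} :
    ∀ {x y : (Σ i : Fin q, Fin (π i)) ⊕ (Fin q × Fin h)}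
      (p : (Qgraph q h π).Walk x y), x.isRight → y.isRight → qIdx x ≠ qIdx y →
      ∃ w ∈ p.support, w.isLeft := by
  intro x y p
  induction p with
  | nil => intro _ _ hne; exact absurd rfl hne
  | @cons u v w hadj p ih =>
    intro hu hw hne
    by_cases hv : v.isLeft
    · exact ⟨v, by simp [SimpleGraph.Walk.support_cons,
        SimpleGraph.Walk.start_mem_support], hv⟩
    · have hv' : v.isRight := by cases v <;> simp_all
      have hq : qIdx u = qIdx v := by
        rcases hadj.2 with h1 | h1
        · exact absurd h1.1 (by cases u <;> simp_all)
        · exact h1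
      obtain ⟨z, hz, hzl⟩ := ih hv' hw (fun hh => hne (hq.trans hh))
      exact ⟨z, by simp [SimpleGraph.Walk.support_cons, hz], hzl⟩

lemma offs_mono {q : ℕ} (π : Fin q → ℕ) {i i' : Fin q} (hii : i < i') {a : ℕ} (ha : a < π i) :
    (∑ j ∈ Finset.Iio i, π j) + a < ∑ j ∈ Finset.Iio i', π j := by
  have hsub : insert i (Finset.Iio i) ⊆ Finset.Iio i' := by
    intro j hj
    simp only [Finset.mem_insert, Finset.mem_Iio] at hj ⊢
    rcases hj with rfl | hj
    · exact hii
    · exact hj.trans hii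
  have h2 : (∑ j ∈ insert i (Finset.Iio i), π j) ≤ ∑ j ∈ Finset.Iio i', π j :=
    Finset.sum_le_sum_of_subset hsub
  rw [Finset.sum_insert (by simp)] at h2
  omega

lemma offs_bound {q : ℕ} (π : Fin q → ℕ) (i : Fin q) {a : ℕ} (ha : a < π i) :
    (∑ j ∈ Finset.Iio i, π j) + a < ∑ j, π j := by
  have h2 : (∑ j ∈ insert i (Finset.Iio i), π j) ≤ ∑ j, π j :=
    Finset.sum_le_sum_of_subset (Finset.subset_univ _)
  rw [Finset.sum_insert (by simp)] at h2
  omega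

lemma offs_inj {q : ℕ} (π : Fin q → ℕ) (x y : Σ i : Fin q, Fin (π i))
    (hxy : (∑ j ∈ Finset.Iio x.1, π j) + (x.2 : ℕ) = (∑ j ∈ Finset.Iio y.1, π j) + (y.2 : ℕ)) :
    x = y := by
  obtain ⟨i, a⟩ := x; obtain ⟨i', a'⟩ := y
  rcases lt_trichotomy i i' with h | h | h
  · have := offs_mono π h a.isLt
    exact absurd hxy (by simp at this ⊢; omega)
  · subst h
    have : a = a' := Fin.ext (by simpa using hxy)
    rw [this]
  · have := offs_mono π h a'.isLt
    exact absurd hxy (by simp at this ⊢; omega)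

/-- For `1 ≤ s ≤ k`, `1 ≤ q ≤ s`, and a partition `π_1 + ⋯ + π_q = s` of `s` into
positive integers, the graph `Q` built from cliques `B_i` (`|B_i| = π i`) and `H_i`
(`|H_i| = k − s`) has tree-depth `k`. -/
theorem treedepth_Qgraph (k s q : ℕ) (hk : 1 ≤ k) (hs1 : 1 ≤ s) (hsk : s ≤ k)
    (hq1 : 1 ≤ q) (hqs : q ≤ s) (π : Fin q → ℕ) (hπ : ∀ i, 1 ≤ π i)
    (hsum : ∑ i, π i = s) :
    treedepth (Qgraph q (k - s) π) = k := by
  -- the ranking witnessing the upper bound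
  have hmem : k ∈ {n | ∃ f, IsRanking (Qgraph q (k - s) π) n f} := by
    refine ⟨Sum.elim (fun x => (k - s) + 1 + ((∑ j ∈ Finset.Iio x.1, π j) + (x.2 : ℕ)))
      (fun y => (y.2 : ℕ) + 1), ?_, ?_⟩
    · rintro (x | y)
      · simp only [Sum.elim_inl]
        have := offs_bound π x.1 x.2.isLt
        rw [hsum] at this
        omega
      · simp only [Sum.elim_inr]
        have := y.2.isLt
        omega
    · rintro (x | x) (y | y) p hp hne heq
      · exfalso
        apply hne
        have hx : x = y := offs_inj π x y (by simp only [Sum.elim_inl] at heq; omega)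
        rw [hx]
      · exfalso
        simp only [Sum.elim_inl, Sum.elim_inr] at heq
        have := y.2.isLt
        omega
      · exfalso
        simp only [Sum.elim_inl, Sum.elim_inr] at heq
        have := x.2.isLt
        omega
      · have hne' : x.1 ≠ y.1 := by
          intro hh
          apply hne
          simp only [Sum.elim_inr] at heq
          have hb : x.2 = y.2 := Fin.ext (by omega)
          obtain ⟨x1, x2⟩ := x; obtain ⟨y1, y2⟩ := y
          simp_all
        obtain ⟨w, hw, hwl⟩ := walk_has_left p rfl rfl hne'
        refine ⟨w, hw, ?_⟩
        obtain (z | z) := w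
        · simp only [Sum.elim_inl, Sum.elim_inr]
          have := x.2.isLt
          omega
        · simp at hwl
  -- lower bound: every ranking needs at least k labels
  have hlow : ∀ n, (∃ f, IsRanking (Qgraph q (k - s) π) n f) → k ≤ n := by
    rintro n ⟨f, hb, hr⟩
    -- adjacent vertices get distinct labels
    have hA : ∀ u v, (Qgraph q (k - s) π).Adj u v → f u ≠ f v := by
      intro u v ha he
      have hp : (SimpleGraph.Walk.cons ha SimpleGraph.Walk.nil).IsPath := by
        simp [SimpleGraph.Walk.isPath_def, ha.ne]
      obtain ⟨w, hw, hlt⟩ := hr _ hp ha.ne he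
      simp only [SimpleGraph.Walk.support_cons, SimpleGraph.Walk.support_nil,
        List.mem_cons, List.mem_singleton, List.not_mem_nil, or_false] at hw
      rcases hw with rfl | rfl <;> omega
    -- on a 2-edge path between same-labeled vertices the middle label is larger
    have hB : ∀ u c v, (Qgraph q (k - s) π).Adj u c → (Qgraph q (k - s) π).Adj c v →
        u ≠ v → f u = f v → f u < f c := by
      intro u c v h1 h2 huv he
      have hp : (SimpleGraph.Walk.cons h1 (SimpleGraph.Walk.cons h2
          SimpleGraph.Walk.nil)).IsPath := by
        simp [SimpleGraph.Walk.isPath_def, h1.ne, h2.ne, huv]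
      obtain ⟨w, hw, hlt⟩ := hr _ hp huv he
      simp only [SimpleGraph.Walk.support_cons, SimpleGraph.Walk.support_nil,
        List.mem_cons, List.mem_singleton, List.not_mem_nil, or_false] at hw
      rcases hw with rfl | rfl | rfl
      · omega
      · exact hlt
      · omega
    have hne1 : Nonempty (Σ i : Fin q, Fin (π i)) :=
      ⟨⟨⟨0, hq1⟩, ⟨0, hπ _⟩⟩⟩
    obtain ⟨x₀, -, hx₀⟩ := Finset.exists_min_image Finset.univ
      (fun x : Σ i : Fin q, Fin (π i) => f (Sum.inl x))
      ⟨Classical.arbitrary _, Finset.mem_univ _⟩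
    -- labels of H_{i₀} avoid all labels of the central clique
    have hclaim : ∀ (b : Fin (k - s)) (y : Σ i : Fin q, Fin (π i)),
        f (Sum.inr (x₀.1, b)) ≠ f (Sum.inl y) := by
      intro b y he
      by_cases hj : y.1 = x₀.1
      · have hadj : (Qgraph q (k - s) π).Adj (Sum.inr (x₀.1, b)) (Sum.inl y) :=
          ⟨by simp, Or.inr hj.symm⟩
        exact hA _ _ hadj he
      · have h1 : (Qgraph q (k - s) π).Adj (Sum.inr (x₀.1, b)) (Sum.inl x₀) :=
          ⟨by simp, Or.inr rfl⟩
        have hxy : x₀ ≠ y := fun hh => hj (by rw [hh])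
        have h2 : (Qgraph q (k - s) π).Adj (Sum.inl x₀) (Sum.inl y) :=
          ⟨by simpa using hxy, Or.inl ⟨rfl, rfl⟩⟩
        have hlt := hB _ _ _ h1 h2 (by simp) he
        have hle := hx₀ y (Finset.mem_univ _)
        omega
    -- the k labels on B ∪ H_{i₀} are pairwise distinct
    set F : ((Σ i : Fin q, Fin (π i)) ⊕ Fin (k - s)) → ℕ :=
      Sum.elim (fun x => f (Sum.inl x)) (fun b => f (Sum.inr (x₀.1, b))) with hF
    have hFinj : Function.Injective F := by
      rintro (x | b) (y | c) he
      · simp only [hF, Sum.elim_inl] at he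
        by_contra hxy
        have hxy' : x ≠ y := fun hh => hxy (by rw [hh])
        have hadj : (Qgraph q (k - s) π).Adj (Sum.inl x) (Sum.inl y) :=
          ⟨by simpa using hxy', Or.inl ⟨rfl, rfl⟩⟩
        exact hA _ _ hadj he
      · exact absurd he.symm (hclaim c x)
      · exact absurd he (hclaim b y)
      · simp only [hF, Sum.elim_inr] at he
        by_contra hbc
        have hbc' : b ≠ c := fun hh => hbc (by rw [hh])
        refine absurd he (hA _ _ ⟨?_, Or.inr rfl⟩)
        simp [Prod.ext_iff]
        intro hbc''
        exact hbc' hbc''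
    have hmemIcc : ∀ z, F z ∈ Finset.Icc 1 n := by
      rintro (x | b)
      · exact Finset.mem_Icc.mpr ⟨(hb _).1, (hb _).2⟩
      · exact Finset.mem_Icc.mpr ⟨(hb _).1, (hb _).2⟩
    have hinj2 : Function.Injective (fun z => (⟨F z, hmemIcc z⟩ : Finset.Icc 1 n)) :=
      fun a b hab => hFinj (congrArg Subtype.val hab)
    have hle := Fintype.card_le_of_injective _ hinj2
    have hc1 : Fintype.card ((Σ i : Fin q, Fin (π i)) ⊕ Fin (k - s)) = k := by
      have : Fintype.card (Σ i : Fin q, Fin (π i)) = s := by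
        simp [Fintype.card_sigma, hsum]
      simp [Fintype.card_sum, this]
      omega
    have hc2 : Fintype.card (Finset.Icc 1 n) = n := by
      simp [Fintype.card_coe, Nat.card_Icc]
    omega
  exact le_antisymm (Nat.sInf_le hmem) (le_csInf ⟨k, hmem⟩ fun n hn => hlow n hn)
end

section
/- Let k ≥ 1 and 1 ≤ s ≤ k, let 1 ≤ q ≤ s, and let π_1 + … + π_q = s be a partition of s into positive integers. Let Q be the graph whose vertex set is the disjoint union of sets B_1, …, B_q with |B_i| = π_i and sets H_1, …, H_q each of size k − s, in which all vertices of B_1 ∪ … ∪ B_q are pairwise adjacent, each H_i induces a complete graph, and every vertex of B_i is adjacent to every vertex of H_i for each i (with no other adjacencies). Then for every edge e of Q, the graph Q − e obtained by deleting e has tree-depth at most k − 1. -/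
section helpers
variable {V : Type*}

lemma walk_side {G : SimpleGraph V} (g : V → Bool) (c : ℕ) (f : V → ℕ)
    (hedge : ∀ a b, G.Adj a b → f a ≤ c → f b ≤ c → g a = g b)
    {u v : V} (p : G.Walk u v) (hsup : ∀ w ∈ p.support, f w ≤ c) : g u = g v := by
  induction p with
  | nil => rfl
  | @cons a b c' hadj p ih =>
      have h1 : f a ≤ c := hsup a (by simp)
      have h2 : f b ≤ c := hsup b (by simp [SimpleGraph.Walk.support_cons])
      exact (hedge a b hadj h1 h2).trans
        (ih (fun w hw => hsup w (by simp [SimpleGraph.Walk.support_cons]; exact Or.inr hw)))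

lemma isRanking_of_sep {G : SimpleGraph V} {k : ℕ} {f : V → ℕ}
    (hb : ∀ v, 1 ≤ f v ∧ f v ≤ k)
    (hsep : ∀ u v, u ≠ v → f u = f v → ∃ g : V → Bool, g u ≠ g v ∧
      ∀ a b, G.Adj a b → f a ≤ f u → f b ≤ f u → g a = g b) :
    IsRanking G k f := by
  refine ⟨hb, fun u v p hp hne heq => ?_⟩
  by_contra hcon
  push_neg at hcon
  obtain ⟨g, hguv, hedge⟩ := hsep u v hne heq
  exact hguv (walk_side g (f u) f hedge p (fun w hw => hcon w hw))

lemma core {q h₀ : ℕ} {π : Fin q → ℕ}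
    (G' : SimpleGraph ((Σ i : Fin q, Fin (π i)) ⊕ (Fin q × Fin h₀)))
    (κ t : ℕ) (f : ((Σ i : Fin q, Fin (π i)) ⊕ (Fin q × Fin h₀)) → ℕ)
    (u0 v0 : (Σ i : Fin q, Fin (π i)) ⊕ (Fin q × Fin h₀))
    (hQ : ∀ x y, G'.Adj x y → qIdx x = qIdx y ∨ t ≤ f x ∨ t ≤ f y)
    (hb : ∀ v, 1 ≤ f v ∧ f v ≤ κ)
    (h3 : ∀ w, G'.Adj u0 w → f u0 < f w)
    (h4 : ∀ u v, u ≠ v → f u = f v →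
      (u = u0 ∧ v = v0) ∨ (u = v0 ∧ v = u0) ∨ (qIdx u ≠ qIdx v ∧ f u < t)) :
    IsRanking G' κ f := by
  apply isRanking_of_sep hb
  intro u v hne heq
  have hmerge : ∀ c : ℕ, c = f u0 → ∀ a b, G'.Adj a b → f a ≤ c → f b ≤ c →
      (fun w => decide (w = u0)) a = (fun w => decide (w = u0)) b := by
    intro c hc a b hab ha hb'
    subst hc
    rcases eq_or_ne a u0 with rfl | ha0
    · exact absurd hb' (not_le.mpr (h3 b hab))
    · rcases eq_or_ne b u0 with rfl | hb0
      · exact absurd ha (not_le.mpr (h3 a hab.symm))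
      · simp [ha0, hb0]
  rcases h4 u v hne heq with ⟨h1, h2⟩ | ⟨h1, h2⟩ | ⟨hq, hlt⟩
  · refine ⟨fun w => decide (w = u0), ?_, hmerge (f u) (by rw [h1])⟩
    have hv : v ≠ u0 := fun h => hne (h1.trans h.symm)
    simp [h1, hv]
  · refine ⟨fun w => decide (w = u0), ?_, hmerge (f u) (by rw [heq, h2])⟩
    have hu : u ≠ u0 := fun h => hne (h.trans h2.symm)
    simp [h2, hu]
  · refine ⟨fun w => decide (qIdx w = qIdx u), by simp [Ne.symm hq], ?_⟩
    intro a b hab ha hb'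
    rcases hQ a b hab with hqeq | hta | htb
    · simp [hqeq]
    · omega
    · omega

end helpers

lemma qgraph_adj {q h : ℕ} {π : Fin q → ℕ} {x y : (Σ i : Fin q, Fin (π i)) ⊕ (Fin q × Fin h)} :
    (Qgraph q h π).Adj x y ↔ x ≠ y ∧ ((x.isLeft ∧ y.isLeft) ∨ qIdx x = qIdx y) := Iff.rfl

lemma case1 (k s q : ℕ) (hs1 : 1 ≤ s) (hsk : s ≤ k) (π : Fin q → ℕ)
    (hπ : ∀ i, 1 ≤ π i) (hsum : ∑ i, π i = s)
    (b1 b2 : Σ i : Fin q, Fin (π i)) (hne : b1 ≠ b2) :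
    ∃ f, IsRanking ((Qgraph q (k-s) π).deleteEdges {s(Sum.inl b1, Sum.inl b2)}) (k-1) f := by
  have hcard : Fintype.card (Σ i : Fin q, Fin (π i)) = s := by simp [hsum]
  let r : (Σ i : Fin q, Fin (π i)) ≃ Fin s := Fintype.equivFinOfCardEq hcard
  have hrne : (r b1 : ℕ) ≠ (r b2 : ℕ) := fun h => r.injective.ne hne (Fin.ext h)
  have hs2 : 2 ≤ s := by have := (r b1).isLt; have := (r b2).isLt; omega
  let t1 : Fin s := ⟨s-1, by omega⟩
  let t2 : Fin s := ⟨s-2, by omega⟩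
  let r1 : (Σ i : Fin q, Fin (π i)) ≃ Fin s := r.trans (Equiv.swap (r b1) t1)
  let r2 : (Σ i : Fin q, Fin (π i)) ≃ Fin s := r1.trans (Equiv.swap (r1 b2) t2)
  have hr1b1 : r1 b1 = t1 := by simp [r1]
  have hr2b2 : r2 b2 = t2 := by simp [r2]
  have hr2b1 : r2 b1 = t1 := by
    have h12 : t1 ≠ r1 b2 := by rw [← hr1b1]; exact fun h => hne (r1.injective h.symm).symm
    have h12' : t1 ≠ t2 := by simp only [t1, t2, ne_eq, Fin.mk.injEq]; omega
    show Equiv.swap (r1 b2) t2 (r1 b1) = t1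
    rw [hr1b1, Equiv.swap_apply_of_ne_of_ne h12 h12']
  have hr2small : ∀ w, w ≠ b1 → w ≠ b2 → (r2 w : ℕ) + 3 ≤ s := by
    intro w h1 h2
    have e1 : r2 w ≠ t1 := by rw [← hr2b1]; exact fun h => h1 (r2.injective h)
    have e2 : r2 w ≠ t2 := by rw [← hr2b2]; exact fun h => h2 (r2.injective h)
    have e1' : (r2 w : ℕ) ≠ s - 1 := by simpa [Fin.ext_iff, t1] using e1
    have e2' : (r2 w : ℕ) ≠ s - 2 := by simpa [Fin.ext_iff, t2] using e2
    have := (r2 w).isLt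
    omega
  refine ⟨Sum.elim (fun w => if w = b1 ∨ w = b2 then 1 else (k-s) + 2 + (r2 w : ℕ))
      (fun mj => if mj.1 = b1.1 ∨ mj.1 = b2.1 then 2 + (mj.2 : ℕ) else 1 + (mj.2 : ℕ)),
    core _ (k-1) ((k-s)+2) _ (Sum.inl b1) (Sum.inl b2) ?_ ?_ ?_ ?_⟩
  · -- hQ
    intro x y hxy
    rw [SimpleGraph.deleteEdges_adj] at hxy
    obtain ⟨hadj, hnot⟩ := hxy
    rw [qgraph_adj] at hadj
    obtain ⟨hxyne, hor⟩ := hadj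
    rcases hor with ⟨hxl, hyl⟩ | hq
    · rcases x with w | mj; swap; · simp at hxl
      rcases y with w' | mj'; swap; · simp at hyl
      by_cases hw : w = b1 ∨ w = b2
      · by_cases hw' : w' = b1 ∨ w' = b2
        · exfalso
          apply hnot
          rw [Set.mem_singleton_iff]
          rcases hw with rfl | rfl <;> rcases hw' with rfl | rfl
          · exact absurd rfl hxyne
          · rfl
          · exact Sym2.eq_swap
          · exact absurd rfl hxyne
        · right; right
          simp only [Sum.elim_inl, if_neg hw']
          omega
      · right; left
        simp only [Sum.elim_inl, if_neg hw]
        omega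
    · exact Or.inl hq
  · -- bounds
    intro v
    rcases v with w | ⟨m, j⟩
    · simp only [Sum.elim_inl]
      split_ifs with hw
      · omega
      · push_neg at hw
        have := hr2small w hw.1 hw.2
        omega
    · simp only [Sum.elim_inr]
      have := j.isLt
      split_ifs <;> omega
  · -- h3 : neighbors of inl b1 have label > 1
    intro w hadj
    rw [SimpleGraph.deleteEdges_adj] at hadj
    obtain ⟨hadj, hnot⟩ := hadj
    rw [qgraph_adj] at hadj
    obtain ⟨hxyne, hor⟩ := hadj
    simp only [Sum.elim_inl, eq_self_iff_true, true_or, if_true]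
    rcases w with w' | ⟨m, j⟩
    · by_cases hw' : w' = b1 ∨ w' = b2
      · rcases hw' with rfl | rfl
        · exact absurd rfl hxyne
        · exact absurd (Set.mem_singleton_iff.mpr rfl) hnot
      · simp only [Sum.elim_inl, if_neg hw']; omega
    · have hq : b1.1 = m := by
        rcases hor with ⟨_, hyl⟩ | hq
        · simp at hyl
        · simpa [qIdx] using hq
      simp only [Sum.elim_inr, if_pos (Or.inl hq.symm)]
      omega
  · -- h4
    have hcross : ∀ (w : Σ i : Fin q, Fin (π i)) (m : Fin q) (j : Fin (k-s)),
        (if w = b1 ∨ w = b2 then 1 else (k-s) + 2 + (r2 w : ℕ)) =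
          (if m = b1.1 ∨ m = b2.1 then 2 + (j : ℕ) else 1 + (j : ℕ)) →
        w.1 ≠ m ∧ (if w = b1 ∨ w = b2 then 1 else (k-s) + 2 + (r2 w : ℕ)) < (k-s) + 2 := by
      intro w m j heq
      have hj := j.isLt
      by_cases hw : w = b1 ∨ w = b2
      · rw [if_pos hw] at heq ⊢
        by_cases hm : m = b1.1 ∨ m = b2.1
        · rw [if_pos hm] at heq; omega
        · refine ⟨?_, by omega⟩
          push_neg at hm
          rcases hw with rfl | rfl
          · exact fun h => hm.1 h.symm
          · exact fun h => hm.2 h.symm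
      · rw [if_neg hw] at heq ⊢
        push_neg at hw
        have := hr2small w hw.1 hw.2
        split_ifs at heq <;> omega
    intro u v huv heq
    rcases u with w | ⟨m, j⟩ <;> rcases v with w' | ⟨m', j'⟩
    · -- inl inl
      simp only [Sum.elim_inl] at heq
      by_cases hw : w = b1 ∨ w = b2 <;> by_cases hw' : w' = b1 ∨ w' = b2
      · rcases hw with rfl | rfl <;> rcases hw' with rfl | rfl
        · exact absurd rfl huv
        · exact Or.inl ⟨rfl, rfl⟩
        · exact Or.inr (Or.inl ⟨rfl, rfl⟩)
        · exact absurd rfl huv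
      · rw [if_pos hw, if_neg hw'] at heq; omega
      · rw [if_neg hw, if_pos hw'] at heq; omega
      · rw [if_neg hw, if_neg hw'] at heq
        exfalso
        apply huv
        have : r2 w = r2 w' := Fin.ext (by omega)
        rw [r2.injective this]
    · simp only [Sum.elim_inl, Sum.elim_inr] at heq
      obtain ⟨h1, h2⟩ := hcross w m' j' heq
      exact Or.inr (Or.inr ⟨by simpa [qIdx] using h1, by simpa using h2⟩)
    · simp only [Sum.elim_inl, Sum.elim_inr] at heq
      obtain ⟨h1, h2⟩ := hcross w' m j heq.symm
      refine Or.inr (Or.inr ⟨by simpa [qIdx] using (Ne.symm h1), ?_⟩)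
      simp only [Sum.elim_inr]
      rw [show (if m = b1.1 ∨ m = b2.1 then 2 + (j : ℕ) else 1 + (j : ℕ)) =
        (if w' = b1 ∨ w' = b2 then 1 else (k-s) + 2 + (r2 w' : ℕ)) from heq]
      exact h2
    · -- inr inr
      simp only [Sum.elim_inr] at heq
      by_cases hmm : m = m'
      · exfalso
        subst hmm
        apply huv
        have : j = j' := by
          by_cases hm : m = b1.1 ∨ m = b2.1
          · rw [if_pos hm, if_pos hm] at heq; exact Fin.ext (by omega)
          · rw [if_neg hm, if_neg hm] at heq; exact Fin.ext (by omega)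
        rw [this]
      · refine Or.inr (Or.inr ⟨by simpa [qIdx] using hmm, ?_⟩)
        simp only [Sum.elim_inr]
        have := j.isLt
        split_ifs <;> omega

lemma case2 (k s q : ℕ) (hs1 : 1 ≤ s) (hsk : s ≤ k) (π : Fin q → ℕ)
    (hπ : ∀ i, 1 ≤ π i) (hsum : ∑ i, π i = s)
    (b : Σ i : Fin q, Fin (π i)) (x : Fin q × Fin (k-s)) (hbx : b.1 = x.1) :
    ∃ f, IsRanking ((Qgraph q (k-s) π).deleteEdges {s(Sum.inl b, Sum.inr x)}) (k-1) f := by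
  have hh0 : 1 ≤ k - s := lt_of_le_of_lt (Nat.zero_le _) x.2.isLt
  have hcard : Fintype.card (Σ i : Fin q, Fin (π i)) = s := by simp [hsum]
  let r : (Σ i : Fin q, Fin (π i)) ≃ Fin s := Fintype.equivFinOfCardEq hcard
  let t1 : Fin s := ⟨s-1, by omega⟩
  let r1 : (Σ i : Fin q, Fin (π i)) ≃ Fin s := r.trans (Equiv.swap (r b) t1)
  have hr1b : r1 b = t1 := by simp [r1]
  have hr1small : ∀ w, w ≠ b → (r1 w : ℕ) + 2 ≤ s := by
    intro w h1
    have e1 : r1 w ≠ t1 := by rw [← hr1b]; exact fun h => h1 (r1.injective h)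
    have e1' : (r1 w : ℕ) ≠ s - 1 := by simpa [Fin.ext_iff, t1] using e1
    have := (r1 w).isLt
    omega
  let h1 : Fin (k-s) := ⟨k-s-1, by omega⟩
  let ρ : Fin (k-s) ≃ Fin (k-s) := Equiv.swap x.2 h1
  have hρx : ρ x.2 = h1 := Equiv.swap_apply_left _ _
  have hρsmall : ∀ j : Fin (k-s), j ≠ x.2 → (ρ j : ℕ) + 2 ≤ k - s := by
    intro j hj
    have e1 : ρ j ≠ h1 := by rw [← hρx]; exact fun h => hj (ρ.injective h)
    have e1' : (ρ j : ℕ) ≠ k - s - 1 := by simpa [Fin.ext_iff, h1] using e1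
    have := (ρ j).isLt
    omega
  refine ⟨Sum.elim (fun w => if w = b then 1 else (k-s) + 1 + (r1 w : ℕ))
      (fun mj => if mj.1 = x.1 then (if mj.2 = x.2 then 1 else 2 + (ρ mj.2 : ℕ))
        else 1 + (mj.2 : ℕ)),
    core _ (k-1) ((k-s)+1) _ (Sum.inl b) (Sum.inr x) ?_ ?_ ?_ ?_⟩
  · -- hQ
    intro y z hyz
    rw [SimpleGraph.deleteEdges_adj] at hyz
    obtain ⟨hadj, hnot⟩ := hyz
    rw [qgraph_adj] at hadj
    obtain ⟨hyzne, hor⟩ := hadj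
    rcases hor with ⟨hyl, hzl⟩ | hq
    · rcases y with w | mj; swap; · simp at hyl
      rcases z with w' | mj'; swap; · simp at hzl
      by_cases hw : w = b
      · have hw' : w' ≠ b := fun h => hyzne (by rw [hw, h])
        right; right
        simp only [Sum.elim_inl, if_neg hw']
        omega
      · right; left
        simp only [Sum.elim_inl, if_neg hw]
        omega
    · exact Or.inl hq
  · -- bounds
    intro v
    rcases v with w | ⟨m, j⟩
    · simp only [Sum.elim_inl]
      split_ifs with hw
      · omega
      · have := hr1small w hw
        omega
    · simp only [Sum.elim_inr]
      have hj := j.isLt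
      by_cases hm : m = x.1
      · rw [if_pos hm]
        by_cases hjx : j = x.2
        · rw [if_pos hjx]; omega
        · rw [if_neg hjx]
          have := hρsmall j hjx
          omega
      · rw [if_neg hm]; omega
  · -- h3 : neighbors of inl b exceed 1
    intro w hadj
    rw [SimpleGraph.deleteEdges_adj] at hadj
    obtain ⟨hadj, hnot⟩ := hadj
    rw [qgraph_adj] at hadj
    obtain ⟨hxyne, hor⟩ := hadj
    simp only [Sum.elim_inl, eq_self_iff_true, if_true]
    rcases w with w' | ⟨m, j⟩
    · by_cases hw' : w' = b
      · exact absurd (by rw [hw']) hxyne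
      · simp only [Sum.elim_inl, if_neg hw']; omega
    · have hqm : b.1 = m := by
        rcases hor with ⟨_, hyl⟩ | hq
        · simp at hyl
        · simpa [qIdx] using hq
      have hm : m = x.1 := by rw [← hqm, hbx]
      simp only [Sum.elim_inr, if_pos hm]
      by_cases hjx : j = x.2
      · exfalso
        apply hnot
        rw [Set.mem_singleton_iff]
        have : (m, j) = x := by rw [hm, hjx]
        rw [this]
      · rw [if_neg hjx]
        have := hρsmall j hjx
        omega
  · -- h4
    have hcross : ∀ (w : Σ i : Fin q, Fin (π i)) (m : Fin q) (j : Fin (k-s)),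
        (if w = b then 1 else (k-s) + 1 + (r1 w : ℕ)) =
          (if m = x.1 then (if j = x.2 then 1 else 2 + (ρ j : ℕ)) else 1 + (j : ℕ)) →
        (w = b ∧ m = x.1 ∧ j = x.2) ∨
          (w.1 ≠ m ∧ (if w = b then 1 else (k-s) + 1 + (r1 w : ℕ)) < (k-s) + 1) := by
      intro w m j heq
      have hj := j.isLt
      by_cases hw : w = b
      · rw [if_pos hw] at heq ⊢
        by_cases hm : m = x.1
        · rw [if_pos hm] at heq
          by_cases hjx : j = x.2
          · exact Or.inl ⟨hw, hm, hjx⟩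
          · rw [if_neg hjx] at heq; omega
        · refine Or.inr ⟨?_, by omega⟩
          rw [hw, hbx]
          exact fun h => hm h.symm
      · rw [if_neg hw] at heq ⊢
        have := hr1small w hw
        exfalso
        by_cases hm : m = x.1
        · rw [if_pos hm] at heq
          by_cases hjx : j = x.2
          · rw [if_pos hjx] at heq; omega
          · rw [if_neg hjx] at heq; have := hρsmall j hjx; omega
        · rw [if_neg hm] at heq; omega
    intro u v huv heq
    rcases u with w | ⟨m, j⟩ <;> rcases v with w' | ⟨m', j'⟩
    · -- inl inl
      simp only [Sum.elim_inl] at heq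
      by_cases hw : w = b <;> by_cases hw' : w' = b
      · exact absurd (by rw [hw, hw']) huv
      · rw [if_pos hw, if_neg hw'] at heq; have := hr1small w' hw'; omega
      · rw [if_neg hw, if_pos hw'] at heq; have := hr1small w hw; omega
      · rw [if_neg hw, if_neg hw'] at heq
        exfalso
        apply huv
        have : r1 w = r1 w' := Fin.ext (by omega)
        rw [r1.injective this]
    · simp only [Sum.elim_inl, Sum.elim_inr] at heq
      rcases hcross w m' j' heq with ⟨hw, hm, hj⟩ | ⟨hne1, hlt⟩
      · exact Or.inl ⟨by rw [hw], by rw [show (m', j') = x from by rw [hm, hj]]⟩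
      · exact Or.inr (Or.inr ⟨by simpa [qIdx] using hne1, by simpa using hlt⟩)
    · simp only [Sum.elim_inl, Sum.elim_inr] at heq
      rcases hcross w' m j heq.symm with ⟨hw, hm, hj⟩ | ⟨hne1, hlt⟩
      · exact Or.inr (Or.inl ⟨by rw [show (m, j) = x from by rw [hm, hj]], by rw [hw]⟩)
      · refine Or.inr (Or.inr ⟨by simpa [qIdx] using (Ne.symm hne1), ?_⟩)
        simp only [Sum.elim_inr]
        rw [show (if m = x.1 then (if j = x.2 then 1 else 2 + (ρ j : ℕ)) else 1 + (j : ℕ)) =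
          (if w' = b then 1 else (k-s) + 1 + (r1 w' : ℕ)) from heq]
        exact hlt
    · -- inr inr
      simp only [Sum.elim_inr] at heq
      by_cases hmm : m = m'
      · exfalso
        subst hmm
        apply huv
        have : j = j' := by
          by_cases hm : m = x.1
          · rw [if_pos hm, if_pos hm] at heq
            by_cases hjx : j = x.2 <;> by_cases hjx' : j' = x.2
            · rw [hjx, hjx']
            · rw [if_pos hjx, if_neg hjx'] at heq; have := hρsmall j' hjx'; omega
            · rw [if_neg hjx, if_pos hjx'] at heq; have := hρsmall j hjx; omega
            · rw [if_neg hjx, if_neg hjx'] at heq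
              have : ρ j = ρ j' := Fin.ext (by omega)
              exact ρ.injective this
          · rw [if_neg hm, if_neg hm] at heq
            exact Fin.ext (by omega)
        rw [this]
      · refine Or.inr (Or.inr ⟨by simpa [qIdx] using hmm, ?_⟩)
        simp only [Sum.elim_inr]
        have hj := j.isLt
        by_cases hm : m = x.1
        · rw [if_pos hm]
          by_cases hjx : j = x.2
          · rw [if_pos hjx]; omega
          · rw [if_neg hjx]; have := hρsmall j hjx; omega
        · rw [if_neg hm]; omega

set_option maxHeartbeats 1000000 in
lemma case3 (k s q : ℕ) (hs1 : 1 ≤ s) (hsk : s ≤ k) (π : Fin q → ℕ)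
    (hπ : ∀ i, 1 ≤ π i) (hsum : ∑ i, π i = s)
    (x1 x2 : Fin q × Fin (k-s)) (hx12 : x1.1 = x2.1) (hne : x1 ≠ x2) :
    ∃ f, IsRanking ((Qgraph q (k-s) π).deleteEdges {s(Sum.inr x1, Sum.inr x2)}) (k-1) f := by
  have hj12 : x1.2 ≠ x2.2 := fun h => hne (by rw [show x1 = (x1.1, x1.2) from rfl, hx12, h])
  have hj12' : (x1.2 : ℕ) ≠ (x2.2 : ℕ) := fun h => hj12 (Fin.ext h)
  have hh2 : 2 ≤ k - s := by have := x1.2.isLt; have := x2.2.isLt; omega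
  have hcard : Fintype.card (Σ i : Fin q, Fin (π i)) = s := by simp [hsum]
  let r : (Σ i : Fin q, Fin (π i)) ≃ Fin s := Fintype.equivFinOfCardEq hcard
  let bstar : Σ i : Fin q, Fin (π i) := ⟨x1.1, ⟨0, hπ x1.1⟩⟩
  let t1 : Fin s := ⟨s-1, by omega⟩
  let r1 : (Σ i : Fin q, Fin (π i)) ≃ Fin s := r.trans (Equiv.swap (r bstar) t1)
  have hr1b : r1 bstar = t1 := by simp [r1]
  have hr1small : ∀ w, w ≠ bstar → (r1 w : ℕ) + 2 ≤ s := by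
    intro w h1
    have e1 : r1 w ≠ t1 := by rw [← hr1b]; exact fun h => h1 (r1.injective h)
    have e1' : (r1 w : ℕ) ≠ s - 1 := by simpa [Fin.ext_iff, t1] using e1
    have := (r1 w).isLt
    omega
  let g1 : Fin (k-s) := ⟨k-s-1, by omega⟩
  let g2 : Fin (k-s) := ⟨k-s-2, by omega⟩
  let ρ1 : Fin (k-s) ≃ Fin (k-s) := Equiv.swap x1.2 g1
  let ρ2 : Fin (k-s) ≃ Fin (k-s) := ρ1.trans (Equiv.swap (ρ1 x2.2) g2)
  have hρ1x1 : ρ1 x1.2 = g1 := Equiv.swap_apply_left _ _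
  have hρ2x2 : ρ2 x2.2 = g2 := by simp [ρ2]
  have hρ2x1 : ρ2 x1.2 = g1 := by
    have h12 : g1 ≠ ρ1 x2.2 := by
      rw [← hρ1x1]; exact fun h => hj12 (ρ1.injective h.symm).symm
    have h12' : g1 ≠ g2 := by simp only [g1, g2, ne_eq, Fin.mk.injEq]; omega
    show Equiv.swap (ρ1 x2.2) g2 (ρ1 x1.2) = g1
    rw [hρ1x1, Equiv.swap_apply_of_ne_of_ne h12 h12']
  have hρ2small : ∀ j : Fin (k-s), j ≠ x1.2 → j ≠ x2.2 → (ρ2 j : ℕ) + 3 ≤ k - s := by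
    intro j h1 h2
    have e1 : ρ2 j ≠ g1 := by rw [← hρ2x1]; exact fun h => h1 (ρ2.injective h)
    have e2 : ρ2 j ≠ g2 := by rw [← hρ2x2]; exact fun h => h2 (ρ2.injective h)
    have e1' : (ρ2 j : ℕ) ≠ k - s - 1 := by simpa [Fin.ext_iff, g1] using e1
    have e2' : (ρ2 j : ℕ) ≠ k - s - 2 := by simpa [Fin.ext_iff, g2] using e2
    have := (ρ2 j).isLt
    omega
  refine ⟨Sum.elim (fun w => if w = bstar then (k-s) else (k-s) + 1 + (r1 w : ℕ))
      (fun mj => if mj.1 = x1.1 then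
        (if mj.2 = x1.2 ∨ mj.2 = x2.2 then 1 else 2 + (ρ2 mj.2 : ℕ)) else 1 + (mj.2 : ℕ)),
    core _ (k-1) ((k-s)+1) _ (Sum.inr x1) (Sum.inr x2) ?_ ?_ ?_ ?_⟩
  · -- hQ
    intro y z hyz
    rw [SimpleGraph.deleteEdges_adj] at hyz
    obtain ⟨hadj, hnot⟩ := hyz
    rw [qgraph_adj] at hadj
    obtain ⟨hyzne, hor⟩ := hadj
    rcases hor with ⟨hyl, hzl⟩ | hq
    · rcases y with w | mj; swap; · simp at hyl
      rcases z with w' | mj'; swap; · simp at hzl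
      by_cases hw : w = bstar
      · have hw' : w' ≠ bstar := fun h => hyzne (by rw [hw, h])
        right; right
        simp only [Sum.elim_inl, if_neg hw']
        have := hr1small w' hw'
        omega
      · right; left
        simp only [Sum.elim_inl, if_neg hw]
        omega
    · exact Or.inl hq
  · -- bounds
    intro v
    rcases v with w | ⟨m, j⟩
    · simp only [Sum.elim_inl]
      split_ifs with hw
      · omega
      · have := hr1small w hw
        omega
    · simp only [Sum.elim_inr]
      have hj := j.isLt
      by_cases hm : m = x1.1
      · rw [if_pos hm]
        by_cases hjx : j = x1.2 ∨ j = x2.2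
        · rw [if_pos hjx]; omega
        · rw [if_neg hjx]
          push_neg at hjx
          have := hρ2small j hjx.1 hjx.2
          omega
      · rw [if_neg hm]; omega
  · -- h3 : neighbors of inr x1 exceed 1
    intro w hadj
    rw [SimpleGraph.deleteEdges_adj] at hadj
    obtain ⟨hadj, hnot⟩ := hadj
    rw [qgraph_adj] at hadj
    obtain ⟨hxyne, hor⟩ := hadj
    have hfx1 : Sum.elim (fun w => if w = bstar then (k-s) else (k-s) + 1 + (r1 w : ℕ))
        (fun mj => if mj.1 = x1.1 then
          (if mj.2 = x1.2 ∨ mj.2 = x2.2 then 1 else 2 + (ρ2 mj.2 : ℕ)) else 1 + (mj.2 : ℕ))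
        (Sum.inr x1) = 1 := by
      simp only [Sum.elim_inr, eq_self_iff_true, true_or, if_true]
    rw [hfx1]
    have hq : x1.1 = qIdx w := by
      rcases hor with ⟨hyl, _⟩ | hq
      · simp at hyl
      · simpa [qIdx] using hq
    rcases w with w' | ⟨m, j⟩
    · simp only [qIdx] at hq
      by_cases hw' : w' = bstar
      · simp only [Sum.elim_inl, if_pos hw']; omega
      · simp only [Sum.elim_inl, if_neg hw']; omega
    · simp only [qIdx] at hq
      simp only [Sum.elim_inr, if_pos hq.symm]
      by_cases hjx : j = x1.2 ∨ j = x2.2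
      · exfalso
        rcases hjx with hjx | hjx
        · exact hxyne (by rw [show (m, j) = x1 from by rw [← hq, hjx]])
        · apply hnot
          rw [Set.mem_singleton_iff]
          rw [show (m, j) = x2 from by rw [← hq, hx12, hjx]]
      · rw [if_neg hjx]
        omega
  · -- h4
    have hcross : ∀ (w : Σ i : Fin q, Fin (π i)) (m : Fin q) (j : Fin (k-s)),
        (if w = bstar then (k-s) else (k-s) + 1 + (r1 w : ℕ)) =
          (if m = x1.1 then (if j = x1.2 ∨ j = x2.2 then 1 else 2 + (ρ2 j : ℕ))
            else 1 + (j : ℕ)) →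
        w.1 ≠ m ∧ (if w = bstar then (k-s) else (k-s) + 1 + (r1 w : ℕ)) < (k-s) + 1 := by
      intro w m j heq
      have hj := j.isLt
      by_cases hw : w = bstar
      · rw [if_pos hw] at heq ⊢
        by_cases hm : m = x1.1
        · exfalso
          rw [if_pos hm] at heq
          by_cases hjx : j = x1.2 ∨ j = x2.2
          · rw [if_pos hjx] at heq; omega
          · rw [if_neg hjx] at heq
            push_neg at hjx
            have := hρ2small j hjx.1 hjx.2
            omega
        · refine ⟨?_, by omega⟩
          rw [hw]
          exact fun h => hm h.symm
      · rw [if_neg hw] at heq ⊢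
        have := hr1small w hw
        exfalso
        by_cases hm : m = x1.1
        · rw [if_pos hm] at heq
          by_cases hjx : j = x1.2 ∨ j = x2.2
          · rw [if_pos hjx] at heq; omega
          · rw [if_neg hjx] at heq
            push_neg at hjx
            have := hρ2small j hjx.1 hjx.2
            omega
        · rw [if_neg hm] at heq; omega
    intro u v huv heq
    rcases u with w | ⟨m, j⟩ <;> rcases v with w' | ⟨m', j'⟩
    · -- inl inl
      simp only [Sum.elim_inl] at heq
      by_cases hw : w = bstar <;> by_cases hw' : w' = bstar
      · exact absurd (by rw [hw, hw']) huv
      · rw [if_pos hw, if_neg hw'] at heq; have := hr1small w' hw'; omega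
      · rw [if_neg hw, if_pos hw'] at heq; have := hr1small w hw; omega
      · rw [if_neg hw, if_neg hw'] at heq
        exfalso
        apply huv
        have : r1 w = r1 w' := Fin.ext (by omega)
        rw [r1.injective this]
    · simp only [Sum.elim_inl, Sum.elim_inr] at heq
      obtain ⟨hne1, hlt⟩ := hcross w m' j' heq
      exact Or.inr (Or.inr ⟨by simpa [qIdx] using hne1, by simpa using hlt⟩)
    · simp only [Sum.elim_inl, Sum.elim_inr] at heq
      obtain ⟨hne1, hlt⟩ := hcross w' m j heq.symm
      refine Or.inr (Or.inr ⟨by simpa [qIdx] using (Ne.symm hne1), ?_⟩)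
      simp only [Sum.elim_inr]
      rw [show (if m = x1.1 then (if j = x1.2 ∨ j = x2.2 then 1 else 2 + (ρ2 j : ℕ))
        else 1 + (j : ℕ)) = (if w' = bstar then (k-s) else (k-s) + 1 + (r1 w' : ℕ)) from heq]
      exact hlt
    · -- inr inr
      simp only [Sum.elim_inr] at heq
      by_cases hmm : m = m'
      · subst hmm
        have hjj : j ≠ j' := fun h => huv (by rw [h])
        by_cases hm : m = x1.1
        · rw [if_pos hm, if_pos hm] at heq
          by_cases hjx : j = x1.2 ∨ j = x2.2
          · by_cases hjx' : j' = x1.2 ∨ j' = x2.2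
            · rcases hjx with hj1 | hj2 <;> rcases hjx' with hj1' | hj2'
              · exact absurd (by rw [hj1, hj1']) hjj
              · exact Or.inl ⟨by rw [show (m, j) = x1 from by rw [hm, hj1]],
                  by rw [show (m, j') = x2 from by rw [hm, hx12, hj2']]⟩
              · exact Or.inr (Or.inl ⟨by rw [show (m, j) = x2 from by rw [hm, hx12, hj2]],
                  by rw [show (m, j') = x1 from by rw [hm, hj1']]⟩)
              · exact absurd (by rw [hj2, hj2']) hjj
            · exfalso
              rw [if_pos hjx, if_neg hjx'] at heq
              push_neg at hjx'
              have := hρ2small j' hjx'.1 hjx'.2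
              omega
          · exfalso
            by_cases hjx' : j' = x1.2 ∨ j' = x2.2
            · rw [if_neg hjx, if_pos hjx'] at heq
              push_neg at hjx
              have := hρ2small j hjx.1 hjx.2
              omega
            · rw [if_neg hjx, if_neg hjx'] at heq
              have : ρ2 j = ρ2 j' := Fin.ext (by omega)
              exact hjj (ρ2.injective this)
        · exfalso
          rw [if_neg hm, if_neg hm] at heq
          exact hjj (Fin.ext (by omega))
      · refine Or.inr (Or.inr ⟨by simpa [qIdx] using hmm, ?_⟩)
        simp only [Sum.elim_inr]
        have hj := j.isLt
        by_cases hm : m = x1.1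
        · rw [if_pos hm]
          by_cases hjx : j = x1.2 ∨ j = x2.2
          · rw [if_pos hjx]; omega
          · rw [if_neg hjx]
            push_neg at hjx
            have := hρ2small j hjx.1 hjx.2
            omega
        · rw [if_neg hm]; omega

theorem treedepth_Qgraph_deleteEdge_le' (k s q : ℕ) (hk : 1 ≤ k) (hs1 : 1 ≤ s)
    (hsk : s ≤ k) (hq1 : 1 ≤ q) (hqs : q ≤ s) (π : Fin q → ℕ) (hπ : ∀ i, 1 ≤ π i)
    (hsum : ∑ i, π i = s)
    (e : Sym2 ((Σ i : Fin q, Fin (π i)) ⊕ (Fin q × Fin (k - s))))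
    (he : e ∈ (Qgraph q (k - s) π).edgeSet) :
    sInf {n | ∃ f, IsRanking ((Qgraph q (k - s) π).deleteEdges {e}) n f} ≤ k - 1 := by
  induction e using Sym2.ind with
  | _ a b =>
    rw [SimpleGraph.mem_edgeSet, qgraph_adj] at he
    obtain ⟨hne, hor⟩ := he
    have key : ∃ f, IsRanking ((Qgraph q (k-s) π).deleteEdges {s(a, b)}) (k-1) f := by
      rcases a with w | x <;> rcases b with w' | x'
      · exact case1 k s q hs1 hsk π hπ hsum w w' (by simpa using hne)
      · have hq : w.1 = x'.1 := by
          rcases hor with ⟨_, h⟩ | h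
          · simp at h
          · simpa [qIdx] using h
        exact case2 k s q hs1 hsk π hπ hsum w x' hq
      · have hq : w'.1 = x.1 := by
          rcases hor with ⟨h, _⟩ | h
          · simp at h
          · simpa [qIdx] using h.symm
        rw [Sym2.eq_swap]
        exact case2 k s q hs1 hsk π hπ hsum w' x hq
      · have hq : x.1 = x'.1 := by
          rcases hor with ⟨h, _⟩ | h
          · simp at h
          · simpa [qIdx] using h
        exact case3 k s q hs1 hsk π hπ hsum x x' hq (by simpa using hne)
    obtain ⟨f, hf⟩ := key
    exact Nat.sInf_le ⟨f, hf⟩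

/-- For `1 ≤ s ≤ k`, `1 ≤ q ≤ s`, and a partition `π_1 + ⋯ + π_q = s` of `s` into
positive integers, deleting any edge of the graph `Q` (built from cliques `B_i` with
`|B_i| = π i` and `H_i` with `|H_i| = k − s`) yields a graph of tree-depth at most
`k − 1`. -/
theorem treedepth_Qgraph_deleteEdge_le (k s q : ℕ) (hk : 1 ≤ k) (hs1 : 1 ≤ s)
    (hsk : s ≤ k) (hq1 : 1 ≤ q) (hqs : q ≤ s) (π : Fin q → ℕ) (hπ : ∀ i, 1 ≤ π i)
    (hsum : ∑ i, π i = s)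
    (e : Sym2 ((Σ i : Fin q, Fin (π i)) ⊕ (Fin q × Fin (k - s))))
    (he : e ∈ (Qgraph q (k - s) π).edgeSet) :
    treedepth ((Qgraph q (k - s) π).deleteEdges {e}) ≤ k - 1 := by
  exact treedepth_Qgraph_deleteEdge_le' k s q hk hs1 hsk hq1 hqs π hπ hsum e he
end

section
/- Let k ≥ 1 and 1 ≤ s ≤ k, let 1 ≤ q ≤ s, and let π_1 + … + π_q = s be a partition of s into positive integers. Let Q be the graph whose vertex set is the disjoint union of sets B_1, …, B_q with |B_i| = π_i and sets H_1, …, H_q each of size k − s, in which all vertices of B_1 ∪ … ∪ B_q are pairwise adjacent, each H_i induces a complete graph, and every vertex of B_i is adjacent to every vertex of H_i for each i (with no other adjacencies). Then for every vertex v of Q, the graph Q − v obtained by deleting v has tree-depth exactly k − 1. -/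
open SimpleGraph

namespace TDAux

variable {V : Type*} {G : SimpleGraph V}

lemma ranking_adj_ne {K : ℕ} {f : V → ℕ} (hf : IsRanking G K f) {u w : V}
    (h : G.Adj u w) : f u ≠ f w := by
  intro heq
  have hp : (Walk.cons h Walk.nil).IsPath := by
    simp [Walk.isPath_def, h.ne]
  obtain ⟨x, hx, hlt⟩ := hf.2 _ hp h.ne heq
  simp [Walk.support_cons] at hx
  rcases hx with rfl | rfl <;> omega

lemma ranking_path3 {K : ℕ} {f : V → ℕ} (hf : IsRanking G K f) {u m w : V}
    (h1 : G.Adj u m) (h2 : G.Adj m w) (huw : u ≠ w) (heq : f u = f w) :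
    f u < f m := by
  have hp : (Walk.cons h1 (Walk.cons h2 Walk.nil)).IsPath := by
    simp [Walk.isPath_def, h1.ne, h2.ne, huw]
  obtain ⟨x, hx, hlt⟩ := hf.2 _ hp huw heq
  simp [Walk.support_cons] at hx
  rcases hx with rfl | rfl | rfl
  · omega
  · exact hlt
  · omega

lemma exists_cross {u w : V} (p : G.Walk u w) (S : Set V) (hu : u ∉ S) (hw : w ∈ S) :
    ∃ a b : V, G.Adj a b ∧ a ∉ S ∧ b ∈ S ∧ a ∈ p.support := by
  obtain ⟨d, hd, h1, h2⟩ := p.exists_boundary_dart Sᶜ hu (fun hc => hc hw)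
  exact ⟨d.fst, d.snd, d.adj, h1, not_not.mp h2,
    Walk.dart_fst_mem_support_of_mem_darts p hd⟩

def pSum (q : ℕ) (π : Fin q → ℕ) (n : ℕ) : ℕ :=
  ∑ i ∈ Finset.range n, (if h : i < q then π ⟨i, h⟩ else 0)

lemma pSum_mono {q : ℕ} (π : Fin q → ℕ) {m n : ℕ} (h : m ≤ n) :
    pSum q π m ≤ pSum q π n :=
  Finset.sum_le_sum_of_subset (Finset.range_subset_range.mpr h)

lemma pSum_q {q : ℕ} (π : Fin q → ℕ) : pSum q π q = ∑ i, π i := by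
  rw [pSum, ← Fin.sum_univ_eq_sum_range]
  exact Finset.sum_congr rfl fun i _ => by simp [i.isLt]

def qrank {q : ℕ} (π : Fin q → ℕ) (x : Σ i : Fin q, Fin (π i)) : ℕ :=
  pSum q π x.1.val + x.2.val

lemma qrank_lt_next {q : ℕ} (π : Fin q → ℕ) (x : Σ i : Fin q, Fin (π i)) :
    qrank π x < pSum q π (x.1.val + 1) := by
  have h : pSum q π (x.1.val + 1) = pSum q π x.1.val + π x.1 := by
    rw [pSum, pSum, Finset.sum_range_succ]
    congr 1
    simp [x.1.isLt]
  rw [h, qrank]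
  have := x.2.isLt
  omega

lemma qrank_lt_sum {q : ℕ} (π : Fin q → ℕ) (x : Σ i : Fin q, Fin (π i)) :
    qrank π x < ∑ i, π i := by
  calc qrank π x < pSum q π (x.1.val + 1) := qrank_lt_next π x
  _ ≤ pSum q π q := pSum_mono π x.1.isLt
  _ = ∑ i, π i := pSum_q π

lemma qrank_injective {q : ℕ} (π : Fin q → ℕ) : Function.Injective (qrank π) := by
  have key : ∀ x y : Σ i : Fin q, Fin (π i), x.1.val < y.1.val → qrank π x < qrank π y := by
    intro x y h
    calc qrank π x < pSum q π (x.1.val + 1) := qrank_lt_next π x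
    _ ≤ pSum q π y.1.val := pSum_mono π (by omega)
    _ ≤ qrank π y := Nat.le_add_right _ _
  intro x y hxy
  rcases lt_trichotomy x.1.val y.1.val with h | h | h
  · exact absurd hxy (Nat.ne_of_lt (key x y h))
  · obtain ⟨j, a⟩ := x; obtain ⟨j', a'⟩ := y
    simp only at h
    have hj : j = j' := Fin.ext h
    subst hj
    have ha : a.val = a'.val := by simpa [qrank] using hxy
    exact congrArg _ (Fin.ext ha)
  · exact absurd hxy.symm (Nat.ne_of_lt (key y x h))

def skrank {q : ℕ} (π : Fin q → ℕ) (z x : Σ i : Fin q, Fin (π i)) : ℕ :=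
  if qrank π x < qrank π z then qrank π x else qrank π x - 1

lemma skrank_le {q : ℕ} (π : Fin q → ℕ) {z x : Σ i : Fin q, Fin (π i)} (hxz : x ≠ z) :
    skrank π z x ≤ (∑ i, π i) - 2 := by
  have h1 := qrank_lt_sum π x
  have h2 := qrank_lt_sum π z
  have h3 : qrank π x ≠ qrank π z := fun hc => hxz (qrank_injective π hc)
  rw [skrank]; split <;> omega

lemma two_le_sum {q : ℕ} (π : Fin q → ℕ) {z x : Σ i : Fin q, Fin (π i)} (hxz : x ≠ z) :
    2 ≤ ∑ i, π i := by
  have h1 := qrank_lt_sum π x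
  have h2 := qrank_lt_sum π z
  have h3 : qrank π x ≠ qrank π z := fun hc => hxz (qrank_injective π hc)
  omega

lemma skrank_inj {q : ℕ} (π : Fin q → ℕ) {z x y : Σ i : Fin q, Fin (π i)}
    (hx : x ≠ z) (hy : y ≠ z) (h : skrank π z x = skrank π z y) : x = y := by
  apply qrank_injective π
  have hxz : qrank π x ≠ qrank π z := fun hc => hx (qrank_injective π hc)
  have hyz : qrank π y ≠ qrank π z := fun hc => hy (qrank_injective π hc)
  unfold skrank at h
  split at h <;> split at h <;> omega


lemma lower (q hh : ℕ) (hq : 1 ≤ q) (π : Fin q → ℕ)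
    (v : (Σ i : Fin q, Fin (π i)) ⊕ (Fin q × Fin hh)) (K : ℕ)
    (f : ↥{w : (Σ i : Fin q, Fin (π i)) ⊕ (Fin q × Fin hh) | w ≠ v} → ℕ)
    (hf : IsRanking ((Qgraph q hh π).induce {w | w ≠ v}) K f) :
    hh + (∑ i, π i) - 1 ≤ K := by
  classical
  set f' : ((Σ i : Fin q, Fin (π i)) ⊕ (Fin q × Fin hh)) → ℕ :=
    fun u => if hu : u ≠ v then f ⟨u, hu⟩ else 0 with hf'
  have fval : ∀ u (hu : u ≠ v), f' u = f ⟨u, hu⟩ := fun u hu => dif_pos hu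
  -- adjacent vertices get distinct labels
  have hane : ∀ u w, (hu : u ≠ v) → (hw : w ≠ v) → (Qgraph q hh π).Adj u w →
      f' u ≠ f' w := by
    intro u w hu hw hadj
    have hadj' : ((Qgraph q hh π).induce {w | w ≠ v}).Adj ⟨u, hu⟩ ⟨w, hw⟩ := hadj
    have h2 := ranking_adj_ne hf hadj'
    rw [fval u hu, fval w hw]
    exact h2
  have hane3 : ∀ u m w, (hu : u ≠ v) → (hm : m ≠ v) → (hw : w ≠ v) → u ≠ w →
      (Qgraph q hh π).Adj u m → (Qgraph q hh π).Adj m w →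
      f' u = f' w → f' u < f' m := by
    intro u m w hu hm hw huw h1 h2 heq
    have h1' : ((Qgraph q hh π).induce {w | w ≠ v}).Adj ⟨u, hu⟩ ⟨m, hm⟩ := h1
    have h2' : ((Qgraph q hh π).induce {w | w ≠ v}).Adj ⟨m, hm⟩ ⟨w, hw⟩ := h2
    have huw' : (⟨u, hu⟩ : ↥{w | w ≠ v}) ≠ ⟨w, hw⟩ :=
      fun hc => huw (congrArg Subtype.val hc)
    rw [fval u hu, fval w hw] at heq
    have h3 := ranking_path3 hf h1' h2' huw' heq
    rw [fval u hu, fval m hm]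
    exact h3
  -- adjacency constructors
  have adjLL : ∀ x y : Σ i : Fin q, Fin (π i), x ≠ y →
      (Qgraph q hh π).Adj (Sum.inl x) (Sum.inl y) :=
    fun x y hxy => (⟨fun hc => hxy (Sum.inl.inj hc), Or.inl ⟨rfl, rfl⟩⟩ : _ ≠ _ ∧ _)
  have adjRR : ∀ (j : Fin q) (b b' : Fin hh), b ≠ b' →
      (Qgraph q hh π).Adj (Sum.inr (j, b)) (Sum.inr (j, b')) :=
    fun j b b' hbb =>
      (⟨fun hc => hbb (congrArg Prod.snd (Sum.inr.inj hc)), Or.inr rfl⟩ : _ ≠ _ ∧ _)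
  have adjLR : ∀ (x : Σ i : Fin q, Fin (π i)) (j : Fin q) (b : Fin hh), x.1 = j →
      (Qgraph q hh π).Adj (Sum.inl x) (Sum.inr (j, b)) :=
    fun x j b hx => (⟨fun hc => Sum.inl_ne_inr hc, Or.inr hx⟩ : _ ≠ _ ∧ _)
  -- choose the block of the minimal-label central vertex
  set C : Finset ((Σ i : Fin q, Fin (π i)) ⊕ (Fin q × Fin hh)) :=
    Finset.univ.filter (fun u => u.isLeft = true ∧ u ≠ v) with hC
  obtain ⟨j0, hmin⟩ : ∃ j0 : Fin q, ∀ x : Σ i : Fin q, Fin (π i),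
      Sum.inl x ≠ v → x.1 ≠ j0 → ∃ x' : Σ i : Fin q, Fin (π i),
        x'.1 = j0 ∧ Sum.inl x' ≠ v ∧ x' ≠ x ∧ f' (Sum.inl x') ≤ f' (Sum.inl x) := by
    by_cases hCne : C.Nonempty
    · obtain ⟨b, hbC, hb⟩ := Finset.exists_min_image C f' hCne
      rcases b with xs | pr
      · refine ⟨xs.1, fun x hxv hxj => ⟨xs, rfl, ?_, ?_, ?_⟩⟩
        · exact (Finset.mem_filter.mp hbC).2.2
        · exact fun hc => hxj (congrArg Sigma.fst hc.symm)
        · exact hb _ (Finset.mem_filter.mpr ⟨Finset.mem_univ _, rfl, hxv⟩)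
      · exact absurd (Finset.mem_filter.mp hbC).2.1 (by simp)
    · refine ⟨⟨0, hq⟩, fun x hxv hxj => absurd ?_ hCne⟩
      exact ⟨Sum.inl x, Finset.mem_filter.mpr ⟨Finset.mem_univ _, rfl, hxv⟩⟩
  -- the big clique-ish set
  set T : Finset ((Σ i : Fin q, Fin (π i)) ⊕ (Fin q × Fin hh)) :=
    (Finset.univ.image Sum.inl) ∪
      (Finset.univ.image (fun b : Fin hh => Sum.inr (j0, b))) with hT
  have hTcard : T.card = (∑ i, π i) + hh := by
    rw [hT, Finset.card_union_of_disjoint, Finset.card_image_of_injective _ Sum.inl_injective,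
      Finset.card_image_of_injective _ (fun b b' hbb => congrArg Prod.snd (Sum.inr.inj hbb))]
    · simp [Fintype.card_sigma]
    · rw [Finset.disjoint_left]
      rintro a ha hb
      obtain ⟨x, -, rfl⟩ := Finset.mem_image.mp ha
      obtain ⟨b, -, hc⟩ := Finset.mem_image.mp hb
      exact Sum.inr_ne_inl hc
  have hmemT : ∀ u ∈ T, (u.isLeft = true) ∨ ∃ b : Fin hh, u = Sum.inr (j0, b) := by
    intro u hu
    rcases Finset.mem_union.mp hu with h | h
    · obtain ⟨x, -, rfl⟩ := Finset.mem_image.mp h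
      exact Or.inl rfl
    · obtain ⟨b, -, rfl⟩ := Finset.mem_image.mp h
      exact Or.inr ⟨b, rfl⟩
  -- injectivity of f' on T.erase v
  have hinj : Set.InjOn f' (T.erase v) := by
    -- mixed case helper
    have mixed : ∀ (x : Σ i : Fin q, Fin (π i)) (b : Fin hh),
        Sum.inl x ≠ v → Sum.inr (j0, b) ≠ v →
        f' (Sum.inl x) ≠ f' (Sum.inr (j0, b)) := by
      intro x b hxv hbv
      by_cases hx1 : x.1 = j0
      · exact hane _ _ hxv hbv (adjLR x j0 b hx1)
      · intro heq
        obtain ⟨x', hx'1, hx'v, hx'x, hx'le⟩ := hmin x hxv hx1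
        have hlt := hane3 (Sum.inl x) (Sum.inl x') (Sum.inr (j0, b)) hxv hx'v hbv
          (fun hc => Sum.inl_ne_inr hc)
          (adjLL x x' (fun hc => hx'x hc.symm))
          (adjLR x' j0 b hx'1) heq
        omega
    intro u hu w hw heq
    by_contra hne
    simp only [Finset.coe_erase, Set.mem_diff, Finset.mem_coe, Set.mem_singleton_iff] at hu hw
    obtain ⟨huT, huv⟩ := hu
    obtain ⟨hwT, hwv⟩ := hw
    rcases u with x | ⟨j, b⟩ <;> rcases w with y | ⟨j', b'⟩
    · exact hane _ _ huv hwv (adjLL x y (fun hc => hne (congrArg Sum.inl hc))) heq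
    · have hj' : j' = j0 := by
        rcases hmemT _ hwT with h | ⟨b'', hb''⟩
        · exact absurd h (by simp)
        · exact congrArg Prod.fst (Sum.inr.inj hb'')
      subst hj'
      exact mixed x b' huv hwv heq
    · have hj : j = j0 := by
        rcases hmemT _ huT with h | ⟨b'', hb''⟩
        · exact absurd h (by simp)
        · exact congrArg Prod.fst (Sum.inr.inj hb'')
      subst hj
      exact mixed y b hwv huv heq.symm
    · have hj : j = j0 := by
        rcases hmemT _ huT with h | ⟨b'', hb''⟩
        · exact absurd h (by simp)
        · exact congrArg Prod.fst (Sum.inr.inj hb'')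
      have hj' : j' = j0 := by
        rcases hmemT _ hwT with h | ⟨b'', hb''⟩
        · exact absurd h (by simp)
        · exact congrArg Prod.fst (Sum.inr.inj hb'')
      subst hj; subst hj'
      refine hane _ _ huv hwv (adjRR _ b b' ?_) heq
      intro hc; exact hne (by rw [hc])
  -- conclude by counting
  have hmaps : ∀ u ∈ T.erase v, f' u ∈ Finset.Icc 1 K := by
    intro u hu
    have huv : u ≠ v := Finset.ne_of_mem_erase hu
    have := hf.1 ⟨u, huv⟩
    simp only [hf', dif_pos huv]
    exact Finset.mem_Icc.mpr this
  have hcard := Finset.card_le_card_of_injOn f' hmaps hinj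
  have h1 : T.card - 1 ≤ (T.erase v).card := Finset.pred_card_le_card_erase
  rw [Nat.card_Icc] at hcard
  omega


lemma Q_cross {q hh : ℕ} {π : Fin q → ℕ} {v : (Σ i : Fin q, Fin (π i)) ⊕ (Fin q × Fin hh)}
    {u w : ↥{w : (Σ i : Fin q, Fin (π i)) ⊕ (Fin q × Fin hh) | w ≠ v}}
    (p : ((Qgraph q hh π).induce {w | w ≠ v}).Walk u w)
    {j : Fin q} {b : Fin hh} (hw : w.val = Sum.inr (j, b))
    (hu : ∀ bb : Fin hh, u.val ≠ Sum.inr (j, bb)) :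
    ∃ (a : ↥{w : (Σ i : Fin q, Fin (π i)) ⊕ (Fin q × Fin hh) | w ≠ v})
      (x : Σ i : Fin q, Fin (π i)),
      a ∈ p.support ∧ a.val = Sum.inl x ∧ x.1 = j := by
  obtain ⟨a, b', hadj, haS, hbS, hasup⟩ :=
    exists_cross p {x | ∃ bb : Fin hh, x.val = Sum.inr (j, bb)}
      (by rintro ⟨bb, hbb⟩; exact hu bb hbb) ⟨b, hw⟩
  have hadj' : a.val ≠ b'.val ∧ ((a.val.isLeft ∧ b'.val.isLeft) ∨ qIdx a.val = qIdx b'.val) := hadj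
  obtain ⟨bb, hb'⟩ := hbS
  obtain ⟨hne, hLL | hqi⟩ := hadj'
  · rw [hb'] at hLL
    exact absurd hLL.2 (by simp)
  · rcases hav : a.val with x | ⟨j', cc⟩
    · refine ⟨a, x, hasup, hav, ?_⟩
      rw [hav, hb'] at hqi
      simpa [qIdx] using hqi
    · exfalso
      rw [hav, hb'] at hqi
      simp only [qIdx] at hqi
      exact haS ⟨cc, by rw [hav, hqi]⟩

lemma upper_inl (q hh : ℕ) (π : Fin q → ℕ) (hs : 1 ≤ ∑ i, π i)
    (w0 : Σ i : Fin q, Fin (π i)) :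
    ∃ f, IsRanking ((Qgraph q hh π).induce {w | w ≠ Sum.inl w0}) (hh + (∑ i, π i) - 1) f := by
  classical
  set f : ↥{w : (Σ i : Fin q, Fin (π i)) ⊕ (Fin q × Fin hh) | w ≠ Sum.inl w0} → ℕ :=
    fun x => Sum.elim (fun y => hh + 1 + skrank π w0 y) (fun pr => pr.2.val + 1) x.val
    with hfd
  refine ⟨f, ?_, ?_⟩
  · intro x
    rcases hx : x.val with y | ⟨j, b⟩
    · have hy : y ≠ w0 := fun hc => x.property (by rw [hx, hc])
      have h1 := skrank_le π hy
      have h2 := two_le_sum π hy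
      simp only [hfd, hx, Sum.elim_inl]
      omega
    · simp only [hfd, hx, Sum.elim_inr]
      have := b.isLt
      omega
  · intro u w p hp hne heq
    rcases hu : u.val with y | ⟨j, b⟩ <;> rcases hw : w.val with y' | ⟨j', b'⟩
    · exfalso
      have hy : y ≠ w0 := fun hc => u.property (by rw [hu, hc])
      have hy' : y' ≠ w0 := fun hc => w.property (by rw [hw, hc])
      simp only [hfd, hu, hw, Sum.elim_inl] at heq
      have hyy : y = y' := skrank_inj π hy hy' (by omega)
      exact hne (Subtype.ext (by rw [hu, hw, hyy]))
    · exfalso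
      simp only [hfd, hu, hw, Sum.elim_inl, Sum.elim_inr] at heq
      have := b'.isLt
      omega
    · exfalso
      simp only [hfd, hu, hw, Sum.elim_inl, Sum.elim_inr] at heq
      have := b.isLt
      omega
    · by_cases hjj : j = j'
      · exfalso
        subst hjj
        simp only [hfd, hu, hw, Sum.elim_inr] at heq
        have hbb : b = b' := Fin.ext (by omega)
        exact hne (Subtype.ext (by rw [hu, hw, hbb]))
      · obtain ⟨a, x, hasup, hax, hxj⟩ := Q_cross p hw
          (fun bb hc => hjj (congrArg Prod.fst (Sum.inr.inj (hu.symm.trans hc))))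
        refine ⟨a, hasup, ?_⟩
        simp only [hfd, hu, hax, Sum.elim_inl, Sum.elim_inr]
        have := b.isLt
        omega

lemma upper_inr (q hh : ℕ) (π : Fin q → ℕ) (hπ : ∀ i, 1 ≤ π i) (hs : 1 ≤ ∑ i, π i)
    (i : Fin q) (c : Fin hh) :
    ∃ f, IsRanking ((Qgraph q hh π).induce {w | w ≠ Sum.inr (i, c)})
      (hh + (∑ i, π i) - 1) f := by
  classical
  have hhpos : 0 < hh := c.pos
  set b0 : Σ i : Fin q, Fin (π i) := ⟨i, ⟨0, hπ i⟩⟩ with hb0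
  have hb0i : b0.1 = i := rfl
  set f : ↥{w : (Σ i : Fin q, Fin (π i)) ⊕ (Fin q × Fin hh) | w ≠ Sum.inr (i, c)} → ℕ :=
    fun x => Sum.elim
      (fun y => if y = b0 then hh else hh + 1 + skrank π b0 y)
      (fun pr => if pr.1 = i then (if pr.2.val < c.val then pr.2.val + 1 else pr.2.val)
        else pr.2.val + 1) x.val
    with hfd
  -- value facts
  have fL : ∀ x y, x.val = Sum.inl y →
      f x = if y = b0 then hh else hh + 1 + skrank π b0 y := by
    intro x y hx; simp only [hfd, hx, Sum.elim_inl]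
  have fR : ∀ x (j : Fin q) (b : Fin hh), x.val = Sum.inr (j, b) →
      f x = if j = i then (if b.val < c.val then b.val + 1 else b.val) else b.val + 1 := by
    intro x j b hx; simp only [hfd, hx, Sum.elim_inr]
  have bne : ∀ (x : ↥{w : (Σ i : Fin q, Fin (π i)) ⊕ (Fin q × Fin hh) | w ≠ Sum.inr (i, c)})
      (b : Fin hh), x.val = Sum.inr (i, b) → b.val ≠ c.val := by
    intro x b hx hbc
    exact x.property (by rw [hx, Fin.ext hbc])
  have fLge : ∀ x y, x.val = Sum.inl y → hh ≤ f x := by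
    intro x y hx
    rw [fL x y hx]
    split <;> omega
  have fRle : ∀ x (j : Fin q) (b : Fin hh), x.val = Sum.inr (j, b) → f x ≤ hh := by
    intro x j b hx
    rw [fR x j b hx]
    have h1 := b.isLt
    have h2 := c.isLt
    split
    · split <;> omega
    · omega
  have fRlt : ∀ x (b : Fin hh), x.val = Sum.inr (i, b) → f x < hh := by
    intro x b hx
    rw [fR x i b hx, if_pos rfl]
    have h1 := b.isLt
    have h2 := c.isLt
    have h3 := bne x b hx
    split <;> omega
  refine ⟨f, ?_, ?_⟩
  · intro x
    rcases hx : x.val with y | ⟨j, b⟩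
    · rw [fL x y hx]
      by_cases hy : y = b0
      · rw [if_pos hy]; omega
      · rw [if_neg hy]
        have h1 := skrank_le π hy
        have h2 := two_le_sum π hy
        omega
    · rw [fR x j b hx]
      have h1 := b.isLt
      have h2 := c.isLt
      by_cases hj : j = i
      · have h3 : b.val ≠ c.val := bne x b (by rw [hx, hj])
        rw [if_pos hj]
        split <;> omega
      · rw [if_neg hj]
        omega
  · intro u w p hp hne heq
    have keyLR : ∀ (u w : ↥{w : (Σ i : Fin q, Fin (π i)) ⊕ (Fin q × Fin hh) | w ≠ Sum.inr (i, c)})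
        (p : ((Qgraph q hh π).induce {w | w ≠ Sum.inr (i, c)}).Walk u w)
        (y : Σ i : Fin q, Fin (π i)) (j : Fin q) (b : Fin hh),
        u.val = Sum.inl y → w.val = Sum.inr (j, b) → f u = f w →
        ∃ a ∈ p.support, f u < f a := by
      intro u w p y j b hu hw heq
      have hule := fLge u y hu
      by_cases hj : j = i
      · exfalso
        subst hj
        have := fRlt w b hw
        omega
      · -- crossing into block j, which avoids b0
        obtain ⟨a, x, hasup, hax, hxj⟩ := Q_cross p hw
          (fun bb hc => by rw [hu] at hc; exact Sum.inl_ne_inr hc)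
        have hxb0 : x ≠ b0 := fun hc => hj (by rw [← hxj, hc, hb0i])
        have hfa : f a = hh + 1 + skrank π b0 x := by rw [fL a x hax, if_neg hxb0]
        have hfw : f w ≤ hh := fRle w j b hw
        exact ⟨a, hasup, by omega⟩
    rcases hu : u.val with y | ⟨j, b⟩ <;> rcases hw : w.val with y' | ⟨j', b'⟩
    · exfalso
      rw [fL u y hu, fL w y' hw] at heq
      by_cases hy : y = b0 <;> by_cases hy' : y' = b0
      · exact hne (Subtype.ext (by rw [hu, hw, hy, hy']))
      · rw [if_pos hy, if_neg hy'] at heq; omega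
      · rw [if_neg hy, if_pos hy'] at heq; omega
      · rw [if_neg hy, if_neg hy'] at heq
        have hyy : y = y' := skrank_inj π hy hy' (by omega)
        exact hne (Subtype.ext (by rw [hu, hw, hyy]))
    · exact keyLR u w p y j' b' hu hw heq
    · obtain ⟨a, hasup, hlt⟩ := keyLR w u p.reverse y' j b hw hu heq.symm
      refine ⟨a, by simpa [SimpleGraph.Walk.support_reverse] using hasup, by omega⟩
    · by_cases hjj : j = j'
      · exfalso
        subst hjj
        rw [fR u j b hu, fR w j b' hw] at heq
        have hbb : b.val = b'.val := by
          by_cases hj : j = i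
          · subst hj
            have h1 : b.val ≠ c.val := bne u b hu
            have h2 : b'.val ≠ c.val := bne w b' hw
            rw [if_pos rfl, if_pos rfl] at heq
            split at heq <;> split at heq <;> omega
          · rw [if_neg hj, if_neg hj] at heq
            omega
        exact hne (Subtype.ext (by rw [hu, hw, Fin.ext hbb]))
      · obtain ⟨a, x, hasup, hax, hxj⟩ := Q_cross p hw
          (fun bb hc => hjj (congrArg Prod.fst (Sum.inr.inj (hu.symm.trans hc))))
        refine ⟨a, hasup, ?_⟩
        by_cases hxb0 : x = b0
        · have hji : j' = i := by rw [← hxj, hxb0, hb0i]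
          subst hji
          have hwlt : f w < hh := fRlt w b' hw
          have hfa : f a = hh := by rw [fL a x hax, if_pos hxb0]
          omega
        · have hfa : f a = hh + 1 + skrank π b0 x := by rw [fL a x hax, if_neg hxb0]
          have hfu : f u ≤ hh := fRle u j b hu
          omega

end TDAux

/-- For `1 ≤ s ≤ k`, `1 ≤ q ≤ s`, and a partition `π_1 + ⋯ + π_q = s` of `s` into
positive integers, deleting any vertex of the graph `Q` (built from cliques `B_i` with
`|B_i| = π i` and `H_i` with `|H_i| = k − s`) yields a graph of tree-depth exactly
`k − 1`. -/
theorem treedepth_Qgraph_deleteVertex (k s q : ℕ) (hk : 1 ≤ k) (hs1 : 1 ≤ s)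
    (hsk : s ≤ k) (hq1 : 1 ≤ q) (hqs : q ≤ s) (π : Fin q → ℕ) (hπ : ∀ i, 1 ≤ π i)
    (hsum : ∑ i, π i = s)
    (v : (Σ i : Fin q, Fin (π i)) ⊕ (Fin q × Fin (k - s))) :
    treedepth ((Qgraph q (k - s) π).induce {w | w ≠ v}) = k - 1 := by
  have hs' : 1 ≤ ∑ i, π i := by rw [hsum]; exact hs1
  have harith : (k - s) + (∑ i, π i) - 1 = k - 1 := by rw [hsum]; omega
  have hex : ∃ f, IsRanking ((Qgraph q (k - s) π).induce {w | w ≠ v}) (k - 1) f := by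
    rcases v with w0 | ⟨i, c⟩
    · obtain ⟨f, hf⟩ := TDAux.upper_inl q (k - s) π hs' w0
      exact ⟨f, harith ▸ hf⟩
    · obtain ⟨f, hf⟩ := TDAux.upper_inr q (k - s) π hπ hs' i c
      exact ⟨f, harith ▸ hf⟩
  obtain ⟨f, hf⟩ := hex
  rw [treedepth]
  refine le_antisymm (Nat.sInf_le ⟨f, hf⟩) (le_csInf ⟨k - 1, f, hf⟩ ?_)
  rintro K ⟨g, hg⟩
  have hlow := TDAux.lower q (k - s) hq1 π v K g hg
  rw [harith] at hlow
  exact hlow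
end

section
/- Let k ≥ 3, let 0 ≤ t ≤ 2^{k−2} − 2 with t ≥ 1, and let x be a vertex of R_{k,t} of degree 2 lying on the cycle of R_{k,t} (that is, x = v_j with t + 1 < j < 2^{k−2} + 1 in the labeling below). Then the graph R_{k,t} − x contains a subgraph whose tree-depth is at least k − 1; in particular td(R_{k,t} − x) ≥ k − 1. -/
open SimpleGraph

lemma ranking_path_lt {V : Type*} [DecidableEq V] {G : SimpleGraph V} {f : V → ℕ}
    (hf1 : ∀ v, 1 ≤ f v)
    (hf2 : ∀ ⦃u v : V⦄ (p : G.Walk u v), p.IsPath → u ≠ v → f u = f v →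
      ∃ w ∈ p.support, f u < f w) :
    ∀ (B : ℕ) {u v : V} (p : G.Walk u v), p.IsPath →
      (∀ w ∈ p.support, f w ≤ B) → p.support.length < 2 ^ B := by
  intro B
  induction B with
  | zero =>
    intro u v p hp hb
    have := hb u p.start_mem_support
    have := hf1 u
    omega
  | succ B ih =>
    intro u v p hp hb
    by_cases hall : ∀ w ∈ p.support, f w ≤ B
    · calc p.support.length < 2 ^ B := ih p hp hall
        _ ≤ 2 ^ (B+1) := Nat.pow_le_pow_right (by norm_num) (by omega)
    · push_neg at hall
      obtain ⟨w0, hw0s, hw0⟩ := hall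
      have hw0B : f w0 = B + 1 := le_antisymm (hb _ hw0s) hw0
      have huniq : ∀ z ∈ p.support, z ≠ w0 → f z ≤ B := by
        intro z hz hzw
        by_contra h
        push_neg at h
        have hzB : f z = B + 1 := le_antisymm (hb _ hz) h
        have hmem : w0 ∈ (p.takeUntil z hz).support ∨ w0 ∈ (p.dropUntil z hz).support := by
          rw [← Walk.mem_support_append_iff, Walk.take_spec]
          exact hw0s
        rcases hmem with hm | hm
        · obtain ⟨y, hy, hylt⟩ := hf2 ((p.takeUntil z hz).dropUntil w0 hm)
            ((hp.takeUntil hz).dropUntil hm) hzw.symm (by omega)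
          have : y ∈ p.support :=
            p.support_takeUntil_subset hz (Walk.support_dropUntil_subset _ hm hy)
          have := hb y this
          omega
        · obtain ⟨y, hy, hylt⟩ := hf2 ((p.dropUntil z hz).takeUntil w0 hm)
            ((hp.dropUntil hz).takeUntil hm) hzw (by omega)
          have : y ∈ p.support :=
            p.support_dropUntil_subset hz (Walk.support_takeUntil_subset _ hm hy)
          have := hb y this
          omega
      -- key: any path starting at w0 whose other support labels are ≤ B is short
      have hstart : ∀ {z : V} (r : G.Walk w0 z), r.IsPath →
          (∀ y ∈ r.support, y ≠ w0 → f y ≤ B) → r.support.length ≤ 2 ^ B := by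
        intro z r hr hsub
        cases r with
        | nil =>
          have : (1:ℕ) ≤ 2 ^ B := Nat.one_le_two_pow
          simpa using this
        | cons h q =>
          have hqpath : q.IsPath := hr.of_cons
          have hnodup := hr.support_nodup
          simp only [Walk.support_cons, List.nodup_cons] at hnodup
          have hqsub : ∀ y ∈ q.support, f y ≤ B := by
            intro y hy
            exact hsub y (by simp [hy]) (fun he => hnodup.1 (he ▸ hy))
          have := ih q hqpath hqsub
          simp only [Walk.support_cons, List.length_cons]
          omega
      -- split p at w0
      have hsplit : p.support = (p.takeUntil w0 hw0s).support
          ++ (p.dropUntil w0 hw0s).support.tail := by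
        conv_lhs => rw [← Walk.take_spec p hw0s]
        exact Walk.support_append _ _
      have hb1 : (p.takeUntil w0 hw0s).support.length ≤ 2 ^ B := by
        have := hstart (p.takeUntil w0 hw0s).reverse (hp.takeUntil hw0s).reverse
          (by
            intro y hy hyne
            rw [Walk.support_reverse, List.mem_reverse] at hy
            exact huniq y (p.support_takeUntil_subset hw0s hy) hyne)
        rwa [Walk.support_reverse, List.length_reverse] at this
      have hb2 : (p.dropUntil w0 hw0s).support.length ≤ 2 ^ B :=
        hstart (p.dropUntil w0 hw0s) (hp.dropUntil hw0s)
          (fun y hy hyne => huniq y (p.support_dropUntil_subset hw0s hy) hyne)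
      have hne : (p.dropUntil w0 hw0s).support ≠ [] := Walk.support_ne_nil _
      have htl : (p.dropUntil w0 hw0s).support.tail.length
          = (p.dropUntil w0 hw0s).support.length - 1 := by
        cases hq : (p.dropUntil w0 hw0s).support with
        | nil => exact absurd hq hne
        | cons a l => simp
      rw [hsplit, List.length_append]
      have hpow : (2:ℕ) ^ (B+1) = 2 ^ B + 2 ^ B := by ring
      have h1 : (1:ℕ) ≤ 2 ^ B := Nat.one_le_two_pow
      have hlen1 : 1 ≤ (p.dropUntil w0 hw0s).support.length :=
        List.length_pos_iff.mpr hne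
      omega

section walkinfra
variable {V : Type*} {G : SimpleGraph V}

lemma exists_asc_walk (vf : ℕ → V) :
    ∀ (l a : ℕ), (∀ i, a ≤ i → i < a + l → G.Adj (vf i) (vf (i+1))) →
    ∃ p : G.Walk (vf a) (vf (a + l)), p.support = (List.range' a (l+1)).map vf := by
  intro l
  induction l with
  | zero => intro a _; exact ⟨Walk.nil, by simp⟩
  | succ l ih =>
    intro a hadj
    obtain ⟨p, hp⟩ := ih (a+1) (fun i h1 h2 => hadj i (by omega) (by omega))
    have he : a + 1 + l = a + (l+1) := by omega
    refine ⟨Walk.cons (hadj a le_rfl (by omega)) (p.copy rfl (by rw [he])), ?_⟩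
    rw [Walk.support_cons, Walk.support_copy, hp]
    rw [show l + 1 + 1 = (l+1) + 1 from rfl, List.range'_succ (s := a) (n := l+1) (step := 1)]
    simp

lemma exists_asc_walk' (vf : ℕ → V) (a b : ℕ) (hab : a ≤ b)
    (hadj : ∀ i, a ≤ i → i < b → G.Adj (vf i) (vf (i+1))) :
    ∃ p : G.Walk (vf a) (vf b), p.support = (List.range' a (b+1-a)).map vf := by
  obtain ⟨p, hp⟩ := exists_asc_walk (G := G) vf (b - a) a
    (fun i h1 h2 => hadj i h1 (by omega))
  have he : a + (b - a) = b := by omega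
  refine ⟨p.copy rfl (by rw [he]), ?_⟩
  rw [Walk.support_copy, hp]
  congr 2
  omega

lemma exists_join_walk {u v w z : V} (p : G.Walk u v) (q : G.Walk w z) (h : G.Adj v w) :
    ∃ r : G.Walk u z, r.support = p.support ++ q.support :=
  ⟨p.append (Walk.cons h q), by rw [Walk.support_append]; simp⟩

end walkinfra

section concrete

def RGr (m t : ℕ) : SimpleGraph (Fin (m + 1 + t)) :=
  SimpleGraph.fromRel (fun i j => i.val + 1 = j.val ∨ (i.val = t ∧ j.val = m))

abbrev IGr (m t : ℕ) (x : Fin (m+1+t)) : SimpleGraph ({w | w ≠ x} : Set (Fin (m+1+t))) :=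
  (RGr m t).induce {w | w ≠ x}

variable (m t : ℕ) (x : Fin (m + 1 + t))

def Valid (i : ℕ) : Prop := i < m + 1 + t ∧ i ≠ x.val

instance (i : ℕ) : Decidable (Valid m t x i) := by
  unfold Valid; infer_instance

lemma igr_adj {a b : ({w | w ≠ x} : Set (Fin (m+1+t)))} :
    (IGr m t x).Adj a b ↔ (RGr m t).Adj a.1 b.1 := by
  simp [IGr, SimpleGraph.induce, SimpleGraph.comap_adj]

def vtx (hx0 : 0 < x.val) (i : ℕ) : ({w | w ≠ x} : Set (Fin (m+1+t))) :=
  if h : Valid m t x i then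
    ⟨⟨i, h.1⟩, fun he => h.2 (congrArg Fin.val he)⟩
  else
    ⟨⟨0, by omega⟩, fun he => by
      have := congrArg Fin.val he
      simp at this
      omega⟩

lemma vtx_val (hx0 : 0 < x.val) {i : ℕ} (h : Valid m t x i) :
    (vtx m t x hx0 i).1.1 = i := by
  rw [vtx, dif_pos h]

lemma adj_consec (hx0 : 0 < x.val) {i : ℕ} (h : Valid m t x i) (h' : Valid m t x (i+1)) :
    (IGr m t x).Adj (vtx m t x hx0 i) (vtx m t x hx0 (i+1)) := by
  rw [igr_adj, RGr, SimpleGraph.fromRel_adj]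
  constructor
  · intro he
    have := congrArg Fin.val he
    rw [vtx_val m t x hx0 h, vtx_val m t x hx0 h'] at this
    omega
  · left; left
    rw [vtx_val m t x hx0 h, vtx_val m t x hx0 h']

lemma adj_chord (hx0 : 0 < x.val) (htm : t < m) (h : Valid m t x t) (h' : Valid m t x m) :
    (IGr m t x).Adj (vtx m t x hx0 t) (vtx m t x hx0 m) := by
  rw [igr_adj, RGr, SimpleGraph.fromRel_adj]
  constructor
  · intro he
    have := congrArg Fin.val he
    rw [vtx_val m t x hx0 h, vtx_val m t x hx0 h'] at this
    omega
  · left; right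
    rw [vtx_val m t x hx0 h, vtx_val m t x hx0 h']
    exact ⟨rfl, rfl⟩

lemma exists_interval (hx0 : 0 < x.val) (a b : ℕ) (hab : a ≤ b)
    (hv : ∀ i, a ≤ i → i ≤ b → Valid m t x i) :
    ∃ p : (IGr m t x).Walk (vtx m t x hx0 a) (vtx m t x hx0 b), p.IsPath ∧
      p.support.length = b + 1 - a ∧
      ∀ w ∈ p.support, a ≤ w.1.1 ∧ w.1.1 ≤ b := by
  obtain ⟨p, hp⟩ := exists_asc_walk' (G := IGr m t x) (vtx m t x hx0) a b hab
    (fun i h1 h2 => adj_consec m t x hx0 (hv i h1 (by omega)) (hv (i+1) (by omega) (by omega)))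
  refine ⟨p, ?_, ?_, ?_⟩
  · rw [Walk.isPath_def, hp]
    refine List.Nodup.map_on ?_ List.nodup_range'
    intro i hi i' hi' he
    rw [List.mem_range'_1] at hi hi'
    have h1 := vtx_val m t x hx0 (hv i hi.1 (by omega))
    have h2 := vtx_val m t x hx0 (hv i' hi'.1 (by omega))
    rw [← h1, ← h2, he]
  · rw [hp, List.length_map, List.length_range']
  · intro w hw
    rw [hp, List.mem_map] at hw
    obtain ⟨i, hi, rfl⟩ := hw
    rw [List.mem_range'_1] at hi
    rw [vtx_val m t x hx0 (hv i hi.1 (by omega))]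
    omega

lemma exists_bridge (hx0 : 0 < x.val) (a b c d : ℕ) (hab : a ≤ b) (hcd : c ≤ d)
    (hv1 : ∀ i, a ≤ i → i ≤ b → Valid m t x i)
    (hv2 : ∀ i, c ≤ i → i ≤ d → Valid m t x i)
    (hadj : (IGr m t x).Adj (vtx m t x hx0 b) (vtx m t x hx0 c))
    (hdisj : b < c ∨ d < a) :
    ∃ p : (IGr m t x).Walk (vtx m t x hx0 a) (vtx m t x hx0 d), p.IsPath ∧
      p.support.length = (b + 1 - a) + (d + 1 - c) ∧
      ∀ w ∈ p.support, (a ≤ w.1.1 ∧ w.1.1 ≤ b) ∨ (c ≤ w.1.1 ∧ w.1.1 ≤ d) := by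
  obtain ⟨p1, hp1⟩ := exists_asc_walk' (G := IGr m t x) (vtx m t x hx0) a b hab
    (fun i h1 h2 => adj_consec m t x hx0 (hv1 i h1 (by omega)) (hv1 (i+1) (by omega) (by omega)))
  obtain ⟨p2, hp2⟩ := exists_asc_walk' (G := IGr m t x) (vtx m t x hx0) c d hcd
    (fun i h1 h2 => adj_consec m t x hx0 (hv2 i h1 (by omega)) (hv2 (i+1) (by omega) (by omega)))
  obtain ⟨r, hr⟩ := exists_join_walk p1 p2 hadj
  have hmem : ∀ w ∈ r.support, (a ≤ w.1.1 ∧ w.1.1 ≤ b) ∨ (c ≤ w.1.1 ∧ w.1.1 ≤ d) := by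
    intro w hw
    rw [hr, List.mem_append, hp1, hp2] at hw
    rcases hw with hw | hw <;> rw [List.mem_map] at hw <;> obtain ⟨i, hi, rfl⟩ := hw <;>
      rw [List.mem_range'_1] at hi
    · rw [vtx_val m t x hx0 (hv1 i hi.1 (by omega))]; omega
    · rw [vtx_val m t x hx0 (hv2 i hi.1 (by omega))]; omega
  refine ⟨r, ?_, ?_, hmem⟩
  · rw [Walk.isPath_def, hr, hp1, hp2, ← List.map_append]
    refine List.Nodup.map_on ?_ ?_
    · intro i hi i' hi' he
      rw [List.mem_append, List.mem_range'_1, List.mem_range'_1] at hi hi'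
      have hvi : Valid m t x i := by
        rcases hi with h | h
        · exact hv1 i h.1 (by omega)
        · exact hv2 i h.1 (by omega)
      have hvi' : Valid m t x i' := by
        rcases hi' with h | h
        · exact hv1 i' h.1 (by omega)
        · exact hv2 i' h.1 (by omega)
      have h1 := vtx_val m t x hx0 hvi
      have h2 := vtx_val m t x hx0 hvi'
      rw [← h1, ← h2, he]
    · rw [List.nodup_append]
      refine ⟨List.nodup_range', List.nodup_range', ?_⟩
      intro i hi i' hi'
      rw [List.mem_range'_1] at hi hi'
      omega
  · rw [hr, List.length_append, hp1, hp2, List.length_map, List.length_map,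
      List.length_range', List.length_range']

end concrete

section more
variable (m t : ℕ) (x : Fin (m + 1 + t))

lemma valid_of_ne (w : ({w | w ≠ x} : Set (Fin (m+1+t)))) : Valid m t x w.1.1 :=
  ⟨w.1.isLt, fun h => w.2 (Fin.ext h)⟩

lemma vtx_self (hx0 : 0 < x.val) (w : ({w | w ≠ x} : Set (Fin (m+1+t)))) :
    vtx m t x hx0 w.1.1 = w :=
  Subtype.ext (Fin.ext (vtx_val m t x hx0 (valid_of_ne m t x w)))

lemma exists_interval_down (hx0 : 0 < x.val) (a b : ℕ) (hab : a ≤ b)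
    (hv : ∀ i, a ≤ i → i ≤ b → Valid m t x i) :
    ∃ p : (IGr m t x).Walk (vtx m t x hx0 b) (vtx m t x hx0 a), p.IsPath ∧
      p.support.length = b + 1 - a ∧
      ∀ w ∈ p.support, a ≤ w.1.1 ∧ w.1.1 ≤ b := by
  obtain ⟨p, hp, hl, hm⟩ := exists_interval m t x hx0 a b hab hv
  refine ⟨p.reverse, hp.reverse, ?_, ?_⟩
  · rw [SimpleGraph.Walk.support_reverse, List.length_reverse, hl]
  · intro w hw
    rw [SimpleGraph.Walk.support_reverse, List.mem_reverse] at hw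
    exact hm w hw

lemma join_paths {u v u' v' : ({w | w ≠ x} : Set (Fin (m+1+t)))}
    (p : (IGr m t x).Walk u v) (q : (IGr m t x).Walk u' v') (h : (IGr m t x).Adj v u')
    (hp : p.IsPath) (hq : q.IsPath)
    (hd : ∀ y ∈ p.support, ∀ z ∈ q.support, y.1.1 ≠ z.1.1) :
    ∃ r : (IGr m t x).Walk u v', r.IsPath ∧ r.support = p.support ++ q.support := by
  obtain ⟨r, hr⟩ := exists_join_walk p q h
  refine ⟨r, ?_, hr⟩
  rw [SimpleGraph.Walk.isPath_def, hr, List.nodup_append]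
  refine ⟨hp.support_nodup, hq.support_nodup, ?_⟩
  intro y hy z hz
  exact fun he => hd y hy z hz (by rw [he])

end more

section mainind

lemma main_induction (m t : ℕ) (x : Fin (m+1+t)) (ht1 : 1 ≤ t) (hx1 : t < x.val)
    (hx2 : x.val < m)
    (f : ({w | w ≠ x} : Set (Fin (m+1+t))) → ℕ)
    (hf1 : ∀ v, 1 ≤ f v)
    (hf2 : ∀ ⦃u v⦄ (p : (IGr m t x).Walk u v), p.IsPath → u ≠ v → f u = f v →
      ∃ w ∈ p.support, f u < f w) :
    ∀ (K e g : ℕ), e + g + t + 2 = 2 ^ K → t + e < x.val → x.val + g < m →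
      (∀ w : ({w | w ≠ x} : Set (Fin (m+1+t))),
        w.1.1 ≤ t + e ∨ (m - g ≤ w.1.1 ∧ w.1.1 ≤ m + t) → f w ≤ K) → False := by
  have hx0 : 0 < x.val := by omega
  intro K
  induction K with
  | zero =>
    intro e g hsum _ _ _
    simp at hsum
  | succ K ih =>
    intro e g hsum hea hgb hlab
    have hpow : (2:ℕ) ^ (K+1) = 2 ^ K + 2 ^ K := by ring
    have hpow1 : (1:ℕ) ≤ 2 ^ K := Nat.one_le_two_pow
    have hJm : x.val < m := hx2
    have hvlow : ∀ i, i ≤ t + e → Valid m t x i := by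
      intro i hi; constructor <;> omega
    have hvhigh : ∀ i, m - g ≤ i → i ≤ m + t → Valid m t x i := by
      intro i h1 h2; constructor <;> omega
    have hchord : (IGr m t x).Adj (vtx m t x hx0 t) (vtx m t x hx0 m) :=
      adj_chord m t x hx0 (by omega) (hvlow t (by omega)) (hvhigh m (by omega) (by omega))
    by_cases hbig : 2 ^ K ≤ t + 1
    · -- outer path [0..t] ++ [m..m+t] has ≥ 2^(K+1) vertices
      obtain ⟨p, hp, hlen, hmem⟩ := exists_bridge m t x hx0 0 t m (m+t) (by omega) (by omega)
        (fun i _ h2 => hvlow i (by omega)) (fun i h1 h2 => hvhigh i (by omega) h2)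
        hchord (Or.inl (by omega))
      have hcontra := ranking_path_lt hf1 hf2 (K+1) p hp (fun w hw => by
        rcases hmem w hw with h | h
        · exact hlab w (Or.inl (by omega))
        · exact hlab w (Or.inr ⟨by omega, by omega⟩))
      rw [hlen] at hcontra
      omega
    · push_neg at hbig
      -- inner path Q : [m-g..m] ++ [t..t+e]
      obtain ⟨q, hq, hqlen0, hqmem⟩ := exists_bridge m t x hx0 (m-g) m t (t+e)
        (by omega) (by omega)
        (fun i h1 h2 => hvhigh i h1 (by omega)) (fun i h1 h2 => hvlow i h2)
        hchord.symm (Or.inr (by omega))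
      have hqlen : q.support.length = e + g + 2 := by rw [hqlen0]; omega
      have hqInS : ∀ w ∈ q.support,
          w.1.1 ≤ t + e ∨ (m - g ≤ w.1.1 ∧ w.1.1 ≤ m + t) := by
        intro w hw
        rcases hqmem w hw with h | h
        · exact Or.inr ⟨h.1, by omega⟩
        · exact Or.inl h.2
      -- the max vertex over S
      classical
      set S : Finset ({w | w ≠ x} : Set (Fin (m+1+t))) :=
        Finset.univ.filter (fun w => w.1.1 ≤ t + e ∨ (m - g ≤ w.1.1 ∧ w.1.1 ≤ m + t)) with hS
      have hSne : S.Nonempty := by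
        refine ⟨vtx m t x hx0 0, ?_⟩
        rw [hS, Finset.mem_filter]
        refine ⟨Finset.mem_univ _, Or.inl ?_⟩
        rw [vtx_val m t x hx0 (hvlow 0 (by omega))]
        omega
      obtain ⟨v0, hv0S, hv0max⟩ := Finset.exists_max_image S f hSne
      have hv0P : v0.1.1 ≤ t + e ∨ (m - g ≤ v0.1.1 ∧ v0.1.1 ≤ m + t) :=
        (Finset.mem_filter.mp hv0S).2
      have hmaxS : ∀ w : ({w | w ≠ x} : Set (Fin (m+1+t))),
          (w.1.1 ≤ t + e ∨ (m - g ≤ w.1.1 ∧ w.1.1 ≤ m + t)) → f w ≤ f v0 := by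
        intro w hw
        exact hv0max w (by rw [hS, Finset.mem_filter]; exact ⟨Finset.mem_univ _, hw⟩)
      by_cases hMK : f v0 ≤ K
      · have := ranking_path_lt hf1 hf2 K q hq
          (fun w hw => le_trans (hmaxS w (hqInS w hw)) hMK)
        rw [hqlen] at this
        omega
      · have hM : f v0 = K + 1 := by
          have := hlab v0 hv0P; omega
        -- connectivity within S
        have hconn : ∀ w z : ({w | w ≠ x} : Set (Fin (m+1+t))),
            (w.1.1 ≤ t + e ∨ (m - g ≤ w.1.1 ∧ w.1.1 ≤ m + t)) →
            (z.1.1 ≤ t + e ∨ (m - g ≤ z.1.1 ∧ z.1.1 ≤ m + t)) →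
            w.1.1 < z.1.1 →
            ∃ p : (IGr m t x).Walk w z, p.IsPath ∧
              ∀ y ∈ p.support, (y.1.1 ≤ t + e ∨ (m - g ≤ y.1.1 ∧ y.1.1 ≤ m + t)) := by
          intro w z hPw hPz hlt
          have hw := vtx_self m t x hx0 w
          have hz := vtx_self m t x hx0 z
          rcases hPw with hw1 | hw1 <;> rcases hPz with hz1 | hz1
          · -- both low
            obtain ⟨p, hp, _, hmem⟩ := exists_interval m t x hx0 w.1.1 z.1.1
              (le_of_lt hlt) (fun i _ h2 => hvlow i (by omega))
            refine ⟨p.copy hw hz, by simpa using hp, ?_⟩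
            intro y hy
            rw [Walk.support_copy] at hy
            exact Or.inl (by have := hmem y hy; omega)
          · -- w low, z high : go through the chord
            have hW1 : ∃ p1 : (IGr m t x).Walk w (vtx m t x hx0 t), p1.IsPath ∧
                ∀ y ∈ p1.support, y.1.1 ≤ t + e := by
              rcases Nat.le_total w.1.1 t with hwt | hwt
              · obtain ⟨p, hp, _, hmem⟩ := exists_interval m t x hx0 w.1.1 t hwt
                  (fun i _ h2 => hvlow i (by omega))
                exact ⟨p.copy hw rfl, by simpa using hp,
                  fun y hy => by rw [Walk.support_copy] at hy; have := hmem y hy; omega⟩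
              · obtain ⟨p, hp, _, hmem⟩ := exists_interval_down m t x hx0 t w.1.1 hwt
                  (fun i _ h2 => hvlow i (by omega))
                exact ⟨p.copy hw rfl, by simpa using hp,
                  fun y hy => by rw [Walk.support_copy] at hy; have := hmem y hy; omega⟩
            have hW2 : ∃ p2 : (IGr m t x).Walk (vtx m t x hx0 m) z, p2.IsPath ∧
                ∀ y ∈ p2.support, m - g ≤ y.1.1 ∧ y.1.1 ≤ m + t := by
              rcases Nat.le_total m z.1.1 with hmz | hmz
              · obtain ⟨p, hp, _, hmem⟩ := exists_interval m t x hx0 m z.1.1 hmz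
                  (fun i h1 h2 => hvhigh i (by omega) (by omega))
                exact ⟨p.copy rfl hz, by simpa using hp,
                  fun y hy => by rw [Walk.support_copy] at hy; have := hmem y hy; omega⟩
              · obtain ⟨p, hp, _, hmem⟩ := exists_interval_down m t x hx0 z.1.1 m hmz
                  (fun i h1 h2 => hvhigh i (by omega) (by omega))
                exact ⟨p.copy rfl hz, by simpa using hp,
                  fun y hy => by rw [Walk.support_copy] at hy; have := hmem y hy; omega⟩
            obtain ⟨p1, hp1, hmem1⟩ := hW1
            obtain ⟨p2, hp2, hmem2⟩ := hW2
            obtain ⟨r, hr, hrs⟩ := join_paths m t x p1 p2 hchord hp1 hp2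
              (fun y hy z' hz' => by
                have := hmem1 y hy
                have := hmem2 z' hz'
                omega)
            refine ⟨r, hr, ?_⟩
            intro y hy
            rw [hrs, List.mem_append] at hy
            rcases hy with hy | hy
            · exact Or.inl (hmem1 y hy)
            · exact Or.inr (hmem2 y hy)
          · -- w high, z low: impossible
            exfalso
            omega
          · -- both high
            obtain ⟨p, hp, _, hmem⟩ := exists_interval m t x hx0 w.1.1 z.1.1
              (le_of_lt hlt) (fun i h1 h2 => hvhigh i (by omega) (by omega))
            refine ⟨p.copy hw hz, by simpa using hp, ?_⟩
            intro y hy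
            rw [Walk.support_copy] at hy
            exact Or.inr (by have := hmem y hy; omega)
        -- uniqueness of the max label
        have huniq : ∀ w : ({w | w ≠ x} : Set (Fin (m+1+t))),
            (w.1.1 ≤ t + e ∨ (m - g ≤ w.1.1 ∧ w.1.1 ≤ m + t)) → w ≠ v0 → f w ≤ K := by
          intro w hPw hne
          by_contra hc
          push_neg at hc
          have hfw : f w = K + 1 := by
            have := hlab w hPw; omega
          have hvne : w.1.1 ≠ v0.1.1 := by
            intro h
            exact hne (Subtype.ext (Fin.ext h))
          rcases Nat.lt_or_ge w.1.1 v0.1.1 with hlt | hge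
          · obtain ⟨p, hp, hmemP⟩ := hconn w v0 hPw hv0P hlt
            obtain ⟨y, hy, hylt⟩ := hf2 p hp hne (by omega)
            have := hlab y (hmemP y hy)
            omega
          · have hlt : v0.1.1 < w.1.1 := by omega
            obtain ⟨p, hp, hmemP⟩ := hconn v0 w hv0P hPw hlt
            obtain ⟨y, hy, hylt⟩ := hf2 p hp (Ne.symm hne) (by omega)
            have := hlab y (hmemP y hy)
            omega
        -- contradiction helper from a long path avoiding v0
        have hpathK : ∀ {u v : ({w | w ≠ x} : Set (Fin (m+1+t)))}
            (p : (IGr m t x).Walk u v), p.IsPath →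
            (∀ y ∈ p.support,
              (y.1.1 ≤ t + e ∨ (m - g ≤ y.1.1 ∧ y.1.1 ≤ m + t)) ∧ y ≠ v0) →
            p.support.length < 2 ^ K := by
          intro u v p hp hmem
          exact ranking_path_lt hf1 hf2 K p hp
            (fun y hy => huniq y (hmem y hy).1 (hmem y hy).2)
        have hne_of_val : ∀ y : ({w | w ≠ x} : Set (Fin (m+1+t))),
            y.1.1 ≠ v0.1.1 → y ≠ v0 := by
          intro y h hy
          exact h (congrArg (fun z => Subtype.val z |>.val) hy)
        rcases hv0P with hlow | hhigh
        · rcases Nat.lt_or_ge v0.1.1 t with hit | hit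
          · -- outer a-leg: Q avoids v0
            have := hpathK q hq (fun y hy => ⟨hqInS y hy, hne_of_val y (by
              rcases hqmem y hy with h | h <;> omega)⟩)
            rw [hqlen] at this
            omega
          · rcases Nat.eq_or_lt_of_le hit with hit_eq | hit_gt
            · -- v0 = a (index t)
              by_cases hcase : 2 ^ K ≤ e
              · obtain ⟨p, hp, hlen, hmem⟩ := exists_interval m t x hx0 (t+1) (t+e)
                  (by omega) (fun i _ h2 => hvlow i h2)
                have := hpathK p hp (fun y hy => ⟨Or.inl (hmem y hy).2,
                  hne_of_val y (by have := hmem y hy; omega)⟩)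
                rw [hlen] at this
                omega
              · obtain ⟨p, hp, hlen, hmem⟩ := exists_interval m t x hx0 (m-g) (m+t)
                  (by omega) (fun i h1 h2 => hvhigh i h1 h2)
                have := hpathK p hp (fun y hy => ⟨Or.inr (hmem y hy),
                  hne_of_val y (by have := hmem y hy; omega)⟩)
                rw [hlen] at this
                omega
            · -- inner a-leg: t < v0.1.1 ≤ t+e
              by_cases hfar : 2 ^ K ≤ t + e - v0.1.1
              · obtain ⟨p, hp, hlen, hmem⟩ := exists_interval m t x hx0 (v0.1.1+1) (t+e)
                  (by omega) (fun i _ h2 => hvlow i h2)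
                have := hpathK p hp (fun y hy => ⟨Or.inl (hmem y hy).2,
                  hne_of_val y (by have := hmem y hy; omega)⟩)
                rw [hlen] at this
                omega
              · push_neg at hfar
                refine ih (min (v0.1.1 - t - 1) (2^K - t - 2))
                  ((2^K - t - 2) - min (v0.1.1 - t - 1) (2^K - t - 2)) (by omega) (by omega)
                  (by omega) ?_
                intro w hw
                refine huniq w ?_ (hne_of_val w ?_)
                · rcases hw with h | h
                  · exact Or.inl (by omega)
                  · exact Or.inr ⟨by omega, h.2⟩
                · rcases hw with h | h <;> omega
        · -- v0 on the right side
          obtain ⟨h1i, h2i⟩ := hhigh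
          rcases Nat.lt_or_ge m v0.1.1 with him | him
          · -- outer b-leg: Q avoids v0
            have := hpathK q hq (fun y hy => ⟨hqInS y hy, hne_of_val y (by
              rcases hqmem y hy with h | h <;> omega)⟩)
            rw [hqlen] at this
            omega
          · rcases Nat.eq_or_lt_of_le him with him_eq | him_gt
            · -- v0 = b (index m)
              by_cases hcase : 2 ^ K ≤ g
              · obtain ⟨p, hp, hlen, hmem⟩ := exists_interval m t x hx0 (m-g) (m-1)
                  (by omega) (fun i h1 h2 => hvhigh i h1 (by omega))
                have := hpathK p hp (fun y hy => ⟨Or.inr ⟨(hmem y hy).1, by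
                    have := hmem y hy; omega⟩,
                  hne_of_val y (by have := hmem y hy; omega)⟩)
                rw [hlen] at this
                omega
              · obtain ⟨p, hp, hlen, hmem⟩ := exists_interval m t x hx0 0 (t+e)
                  (by omega) (fun i _ h2 => hvlow i h2)
                have := hpathK p hp (fun y hy => ⟨Or.inl (hmem y hy).2,
                  hne_of_val y (by have := hmem y hy; omega)⟩)
                rw [hlen] at this
                omega
            · -- inner b-leg : m-g ≤ v0.1.1 < m
              by_cases hfar : 2 ^ K ≤ v0.1.1 - (m - g)
              · obtain ⟨p, hp, hlen, hmem⟩ := exists_interval m t x hx0 (m-g) (v0.1.1-1)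
                  (by omega) (fun i h1 h2 => hvhigh i h1 (by omega))
                have := hpathK p hp (fun y hy => ⟨Or.inr ⟨(hmem y hy).1, by
                    have := hmem y hy; omega⟩,
                  hne_of_val y (by have := hmem y hy; omega)⟩)
                rw [hlen] at this
                omega
              · push_neg at hfar
                refine ih ((2^K - t - 2) - min (m - 1 - v0.1.1) (2^K - t - 2))
                  (min (m - 1 - v0.1.1) (2^K - t - 2)) (by omega) (by omega)
                  (by omega) ?_
                intro w hw
                refine huniq w ?_ (hne_of_val w ?_)
                · rcases hw with h | h
                  · exact Or.inl (by omega)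
                  · exact Or.inr ⟨by omega, h.2⟩
                · rcases hw with h | h <;> omega

end mainind

/-- For `k ≥ 3`, `1 ≤ t ≤ 2^(k-2) − 2`, and a degree-2 vertex `x` on the cycle of
`R_{k,t}` (i.e. `x = v_j` with `t + 1 < j < 2^(k-2) + 1`, so the index of `x` is
strictly between `t` and `2^(k-2)`), the graph `R_{k,t} − x` has tree-depth at least
`k − 1`. -/
theorem treedepth_Rgraph_deleteCycleVertex_ge (k t : ℕ) (hk : 3 ≤ k)
    (ht1 : 1 ≤ t) (ht : t ≤ 2 ^ (k - 2) - 2) (x : Fin (2 ^ (k - 2) + 1 + t))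
    (hx1 : t < x.val) (hx2 : x.val < 2 ^ (k - 2)) :
    k - 1 ≤ treedepth ((Rgraph k t).induce {w | w ≠ x}) := by
  classical
  rw [treedepth]
  apply le_csInf
  · refine ⟨Fintype.card ({w | w ≠ x} : Set (Fin (2 ^ (k - 2) + 1 + t))),
      fun v => (Fintype.equivFin _ v).val + 1, fun v => ⟨Nat.le_add_left 1 _, ?_⟩, ?_⟩
    · exact (Fintype.equivFin _ v).isLt
    · intro u v p hp huv hfeq
      dsimp only at hfeq
      exact absurd ((Fintype.equivFin _).injective (Fin.ext (by omega))) huv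
  · rintro b ⟨f, hf1, hf2⟩
    by_contra hb
    push_neg at hb
    have hble : b ≤ k - 2 := by omega
    refine main_induction (2 ^ (k-2)) t x ht1 hx1 hx2 f (fun v => (hf1 v).1) ?_
      (k - 2) (x.val - 1 - t) (2 ^ (k-2) - 1 - x.val) (by omega) (by omega) (by omega) ?_
    · intro u v p hp huv hfeq
      exact hf2 p hp huv hfeq
    · intro w _
      exact le_trans (hf1 w).2 hble
end
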